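/- arXiv:1106.4987 — 10 statements merged into one kernel-verified Lean document; each statement's English description precedes it below -/
import Mathlib

section
/- Let M ∈ ℝ^{m×d} with m < d, Ω ∈ ℝ^{p×d}, and let Λ ⊆ {1,…,p}. Let x₀ ∈ ℝ^d be a vector whose cosupport is exactly Λ, i.e., (Ωx₀)_i = 0 for every i ∈ Λ and (Ωx₀)_i ≠ 0 for every i ∉ Λ. Then x₀ is the unique minimizer of ‖Ωx‖₁ subject to Mx = Mx₀ (i.e., ‖Ωx₀‖₁ < ‖Ωx‖₁ for every x ≠ x₀ with Mx = Mx₀) if and only if for every nonzero z ∈ Null(M) one has |⟨Ω_{Λᶜ} z, sign(Ω_{Λᶜ} x₀)⟩| < ‖Ω_Λ z‖₁. -/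
open Matrix Finset

private lemma abs_add_sign_le (a b : ℝ) : |a| + b * Real.sign a ≤ |a + b| := by
  rcases lt_trichotomy a 0 with h | h | h
  · rw [Real.sign_of_neg h, abs_of_neg h]
    have h1 : -a + b * (-1) = -(a + b) := by ring
    rw [h1]
    exact neg_le_abs _
  · simp [h, abs_nonneg]
  · rw [Real.sign_of_pos h, abs_of_pos h, mul_one]
    exact le_abs_self _

private lemma abs_add_eq_of_lt (a c : ℝ) (h : |c| < |a|) :
    |a + c| = |a| + c * Real.sign a := by
  rcases lt_trichotomy a 0 with ha | ha | ha
  · rw [Real.sign_of_neg ha, abs_of_neg ha]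
    have h1 : a + c < 0 := by
      rw [abs_of_neg ha] at h
      have := le_abs_self c
      linarith
    rw [abs_of_neg h1]; ring
  · exfalso; rw [ha, abs_zero] at h; exact absurd h (not_lt.2 (abs_nonneg c))
  · rw [Real.sign_of_pos ha, abs_of_pos ha, mul_one]
    have h1 : 0 < a + c := by
      rw [abs_of_pos ha] at h
      have := neg_abs_le c
      linarith
    rw [abs_of_pos h1]

/-- For a signal `x₀` whose cosupport is exactly `Λ`, `x₀` is the unique
minimizer of `‖Ωx‖₁` subject to `Mx = Mx₀` iff for every nonzero `z ∈ Null(M)`,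
`|⟨Ω_{Λᶜ} z, sign(Ω_{Λᶜ} x₀)⟩| < ‖Ω_Λ z‖₁`. -/
theorem analysis_l1_unique_minimizer_iff
    {m d p : ℕ} (hmd : m < d)
    (M : Matrix (Fin m) (Fin d) ℝ) (Ω : Matrix (Fin p) (Fin d) ℝ)
    (Λ : Finset (Fin p)) (x₀ : Fin d → ℝ)
    (hcosupp : ∀ i : Fin p, i ∈ Λ ↔ Ω.mulVec x₀ i = 0) :
    (∀ x : Fin d → ℝ, x ≠ x₀ → M.mulVec x = M.mulVec x₀ →
        ∑ i, |Ω.mulVec x₀ i| < ∑ i, |Ω.mulVec x i|)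
    ↔
    (∀ z : Fin d → ℝ, M.mulVec z = 0 → z ≠ 0 →
        |∑ i ∈ Λᶜ, Ω.mulVec z i * Real.sign (Ω.mulVec x₀ i)| <
          ∑ i ∈ Λ, |Ω.mulVec z i|) := by
  have hx0sum : ∑ i, |Ω.mulVec x₀ i| = ∑ i ∈ Λᶜ, |Ω.mulVec x₀ i| := by
    rw [← Finset.sum_add_sum_compl Λ fun i => |Ω.mulVec x₀ i|]
    have hz0 : ∑ i ∈ Λ, |Ω.mulVec x₀ i| = 0 :=
      Finset.sum_eq_zero fun i hi => by rw [(hcosupp i).1 hi, abs_zero]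
    rw [hz0, zero_add]
  constructor
  · -- forward direction
    intro h z hMz hz
    by_contra hcon
    push_neg at hcon
    set S := ∑ i ∈ Λᶜ, Ω.mulVec z i * Real.sign (Ω.mulVec x₀ i) with hS
    set c : ℝ := if 0 ≤ S then -1 else 1 with hc
    have hcS : c * S = -|S| := by
      rw [hc]; split_ifs with h'
      · rw [abs_of_nonneg h']; ring
      · rw [abs_of_neg (lt_of_not_ge h')]; ring
    have hc1 : |c| = 1 := by rw [hc]; split_ifs <;> norm_num
    -- choose a small positive step size t
    set r : Fin p → ℝ := fun i => |Ω.mulVec x₀ i| / (|Ω.mulVec z i| + 1) with hr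
    set T : Finset ℝ := insert (1 : ℝ) (Λᶜ.image r) with hT
    have hTne : T.Nonempty := ⟨1, by simp [hT]⟩
    set t := T.min' hTne with ht
    have htpos : 0 < t := by
      have hmem := T.min'_mem hTne
      rw [← ht, hT] at hmem
      rcases Finset.mem_insert.1 hmem with h1 | h1
      · rw [h1]; norm_num
      · obtain ⟨i, hi, hrfl⟩ := Finset.mem_image.1 h1
        have hx0 : Ω.mulVec x₀ i ≠ 0 := fun hh =>
          (Finset.mem_compl.1 hi) ((hcosupp i).2 hh)
        rw [← hrfl, hr]
        have h2 : 0 < |Ω.mulVec x₀ i| := abs_pos.2 hx0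
        have h3 : 0 < |Ω.mulVec z i| + 1 := by positivity
        positivity
    have htlt : ∀ i ∈ Λᶜ, t * |Ω.mulVec z i| < |Ω.mulVec x₀ i| := by
      intro i hi
      have hle : t ≤ r i :=
        Finset.min'_le _ _ (by
          rw [hT]
          exact Finset.mem_insert_of_mem (Finset.mem_image_of_mem r hi))
      have hx0 : Ω.mulVec x₀ i ≠ 0 := fun hh =>
        (Finset.mem_compl.1 hi) ((hcosupp i).2 hh)
      have hx0' : 0 < |Ω.mulVec x₀ i| := abs_pos.2 hx0
      have hd : 0 < |Ω.mulVec z i| + 1 := by positivity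
      rw [hr] at hle
      have hkey : t * (|Ω.mulVec z i| + 1) ≤ |Ω.mulVec x₀ i| :=
        (le_div_iff₀ hd).1 hle
      nlinarith
    set x : Fin d → ℝ := x₀ + (t * c) • z with hx
    have htc : t * c ≠ 0 := by
      intro hh
      have : |t * c| = 0 := by rw [hh, abs_zero]
      rw [abs_mul, hc1, mul_one, abs_of_pos htpos] at this
      exact htpos.ne' this
    have hxne : x ≠ x₀ := by
      rw [hx]
      intro hh
      have h1 : (t * c) • z = 0 := by
        have := congrArg (· - x₀) hh
        simpa using this
      rcases smul_eq_zero.1 h1 with h2 | h2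
      · exact htc h2
      · exact hz h2
    have hMx : M.mulVec x = M.mulVec x₀ := by
      rw [hx, mulVec_add, mulVec_smul, hMz]
      simp
    have hlt := h x hxne hMx
    have hΩx : ∀ i, Ω.mulVec x i = Ω.mulVec x₀ i + (t * c) * Ω.mulVec z i := by
      intro i
      rw [hx, mulVec_add, mulVec_smul]
      simp [smul_eq_mul]
    have habs_tc : ∀ y : ℝ, |(t * c) * y| = t * |y| := by
      intro y
      rw [abs_mul, abs_mul, hc1, mul_one, abs_of_pos htpos]
    have hsumΛ : ∑ i ∈ Λ, |Ω.mulVec x i| = ∑ i ∈ Λ, t * |Ω.mulVec z i| := by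
      refine Finset.sum_congr rfl fun i hi => ?_
      rw [hΩx, (hcosupp i).1 hi, zero_add, habs_tc]
    have hsumΛc : ∑ i ∈ Λᶜ, |Ω.mulVec x i|
        = ∑ i ∈ Λᶜ, |Ω.mulVec x₀ i| + (t * c) * S := by
      have h1 : ∑ i ∈ Λᶜ, |Ω.mulVec x i|
          = ∑ i ∈ Λᶜ, (|Ω.mulVec x₀ i|
              + (t * c) * Ω.mulVec z i * Real.sign (Ω.mulVec x₀ i)) := by
        refine Finset.sum_congr rfl fun i hi => ?_
        rw [hΩx]
        exact abs_add_eq_of_lt _ _ (by rw [habs_tc]; exact htlt i hi)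
      rw [h1, Finset.sum_add_distrib, hS, Finset.mul_sum]
      congr 1
      exact Finset.sum_congr rfl fun i _ => by ring
    have hfull : ∑ i, |Ω.mulVec x i|
        = ∑ i ∈ Λ, t * |Ω.mulVec z i| + (∑ i ∈ Λᶜ, |Ω.mulVec x₀ i| + (t * c) * S) := by
      rw [← Finset.sum_add_sum_compl Λ fun i => |Ω.mulVec x i|, hsumΛ, hsumΛc]
    have hmulsum : ∑ i ∈ Λ, t * |Ω.mulVec z i| = t * ∑ i ∈ Λ, |Ω.mulVec z i| := by
      rw [Finset.mul_sum]
    have htcS : (t * c) * S = -(t * |S|) := by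
      rw [mul_assoc, hcS]; ring
    have hTS : t * ∑ i ∈ Λ, |Ω.mulVec z i| ≤ t * |S| :=
      mul_le_mul_of_nonneg_left hcon htpos.le
    rw [hfull, hmulsum, htcS, hx0sum] at hlt
    linarith
  · -- backward direction
    intro h x hxne hMx
    set z : Fin d → ℝ := x - x₀ with hzdef
    have hz : z ≠ 0 := sub_ne_zero.2 hxne
    have hMz : M.mulVec z = 0 := by rw [hzdef, mulVec_sub, hMx, sub_self]
    have key := h z hMz hz
    have hΩx : ∀ i, Ω.mulVec x i = Ω.mulVec x₀ i + Ω.mulVec z i := by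
      intro i
      rw [hzdef, mulVec_sub]
      simp
    have h2 : ∑ i ∈ Λ, |Ω.mulVec z i| = ∑ i ∈ Λ, |Ω.mulVec x i| :=
      Finset.sum_congr rfl fun i hi => by rw [hΩx, (hcosupp i).1 hi, zero_add]
    have h3 : ∑ i ∈ Λᶜ, |Ω.mulVec x₀ i|
          + ∑ i ∈ Λᶜ, Ω.mulVec z i * Real.sign (Ω.mulVec x₀ i)
        ≤ ∑ i ∈ Λᶜ, |Ω.mulVec x i| := by
      rw [← Finset.sum_add_distrib]
      refine Finset.sum_le_sum fun i _ => ?_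
      rw [hΩx]
      exact abs_add_sign_le _ _
    have habs := neg_abs_le (∑ i ∈ Λᶜ, Ω.mulVec z i * Real.sign (Ω.mulVec x₀ i))
    rw [hx0sum, ← Finset.sum_add_sum_compl Λ fun i => |Ω.mulVec x i|]
    linarith
end

section
/- Let M ∈ ℝ^{m×d} with m < d, Ω ∈ ℝ^{p×d}, Λ ⊆ {1,…,p} with |Λ| = ℓ ≥ d−m, and let B ∈ ℝ^{(d−m)×d} be a matrix whose rows form a basis of Null(M). Assume the ℓ×(d−m) matrix Ω_Λ Bᵀ has full column rank d−m, so that the Gram matrix B Ω_Λᵀ Ω_Λ Bᵀ is invertible, and set P := Ω_Λ Bᵀ (B Ω_Λᵀ Ω_Λ Bᵀ)⁻¹ ∈ ℝ^{ℓ×(d−m)} (the Moore–Penrose pseudoinverse of B Ω_Λᵀ). If for every x ∈ ℝ^d with Ω_Λ x = 0 one has ‖P · B Ω_{Λᶜ}ᵀ · sign(Ω_{Λᶜ} x)‖_∞ < 1, then every x₀ with Ω_Λ x₀ = 0 is the unique minimizer of ‖Ωx‖₁ subject to Mx = Mx₀. -/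
open Matrix Finset

/-- The submatrix of `Ω` consisting of the rows indexed by `Λ`. -/
def rowSub {p d : ℕ} (Ω : Matrix (Fin p) (Fin d) ℝ) (Λ : Finset (Fin p)) :
    Matrix ↥Λ (Fin d) ℝ :=
  Ω.submatrix (fun i => (i : Fin p)) id

/-- `P = Ω_Λ Bᵀ (B Ω_Λᵀ Ω_Λ Bᵀ)⁻¹`: the Moore–Penrose pseudoinverse of `B Ω_Λᵀ`
when `Ω_Λ Bᵀ` has full column rank. -/
noncomputable def pinvP {p d k : ℕ} (Ω : Matrix (Fin p) (Fin d) ℝ) (Λ : Finset (Fin p))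
    (B : Matrix (Fin k) (Fin d) ℝ) : Matrix ↥Λ (Fin k) ℝ :=
  rowSub Ω Λ * B.transpose * ((B * (rowSub Ω Λ).transpose) * (rowSub Ω Λ * B.transpose))⁻¹

private lemma mySign_mul_self (r : ℝ) : Real.sign r * r = |r| := by
  rcases lt_trichotomy r 0 with h | h | h
  · rw [Real.sign_of_neg h, abs_of_neg h]; ring
  · simp [h]
  · rw [Real.sign_of_pos h, abs_of_pos h]; ring

private lemma myAbs_sign_le (r : ℝ) : |Real.sign r| ≤ 1 := by
  rcases Real.sign_apply_eq r with h | h | h <;> simp [h]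

private lemma myRowSub_mulVec {p d : ℕ} (Ω : Matrix (Fin p) (Fin d) ℝ) (Λ : Finset (Fin p))
    (y : Fin d → ℝ) (j : ↥Λ) : (rowSub Ω Λ).mulVec y j = Ω.mulVec y (j : Fin p) := by
  simp [rowSub, Matrix.mulVec, Matrix.submatrix]

/-- if `‖P · B Ω_{Λᶜ}ᵀ · sign(Ω_{Λᶜ} x)‖_∞ < 1` for every `x` with
`Ω_Λ x = 0`, then every `x₀` with `Ω_Λ x₀ = 0` is the unique minimizer of `‖Ωx‖₁`
subject to `Mx = Mx₀`. -/
theorem analysis_l1_sufficient_sign_condition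
    {m d p ℓ : ℕ} (hmd : m < d)
    (M : Matrix (Fin m) (Fin d) ℝ) (Ω : Matrix (Fin p) (Fin d) ℝ)
    (Λ : Finset (Fin p)) (hcard : Λ.card = ℓ) (hℓ : d - m ≤ ℓ)
    (B : Matrix (Fin (d - m)) (Fin d) ℝ)
    (hBnull : ∀ i : Fin (d - m), M.mulVec (B i) = 0)
    (hBli : LinearIndependent ℝ (fun i : Fin (d - m) => B i))
    (hBspan : ∀ z : Fin d → ℝ, M.mulVec z = 0 →
      z ∈ Submodule.span ℝ (Set.range fun i : Fin (d - m) => B i))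
    (hfullrank : ∀ v : Fin (d - m) → ℝ, (rowSub Ω Λ * B.transpose).mulVec v = 0 → v = 0)
    (hERC : ∀ x : Fin d → ℝ, (∀ i ∈ Λ, Ω.mulVec x i = 0) →
      ∀ j : ↥Λ,
        |(pinvP Ω Λ B * (B * (rowSub Ω Λᶜ).transpose)).mulVec
            (fun i : ↥Λᶜ => Real.sign (Ω.mulVec x (i : Fin p))) j| < 1) :
    ∀ x₀ : Fin d → ℝ, (∀ i ∈ Λ, Ω.mulVec x₀ i = 0) →
      ∀ x : Fin d → ℝ, x ≠ x₀ → M.mulVec x = M.mulVec x₀ →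
        ∑ i, |Ω.mulVec x₀ i| < ∑ i, |Ω.mulVec x i| := by
  intro x₀ hx₀ x hne hMx
  set A : Matrix ↥Λ (Fin (d - m)) ℝ := rowSub Ω Λ * B.transpose with hA
  set G : Matrix (Fin (d - m)) (Fin (d - m)) ℝ :=
    (B * (rowSub Ω Λ).transpose) * (rowSub Ω Λ * B.transpose) with hG
  have hGA : G = A.transpose * A := by
    rw [hG, hA, transpose_mul, transpose_transpose]
  -- z = x - x₀ lies in the null space of M, hence z = Bᵀ v
  set z : Fin d → ℝ := x - x₀ with hz
  have hMz : M.mulVec z = 0 := by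
    rw [hz, mulVec_sub, hMx, sub_self]
  have hzspan := hBspan z hMz
  rw [Submodule.mem_span_range_iff_exists_fun ℝ] at hzspan
  obtain ⟨v, hv⟩ := hzspan
  have hzv : z = B.transpose.mulVec v := by
    rw [mulVec_transpose, ← hv]
    funext j
    simp [Matrix.vecMul, dotProduct]
  have hvne : v ≠ 0 := by
    intro h
    apply hne
    have hz0 : z = 0 := by rw [hzv, h, mulVec_zero]
    rw [hz] at hz0
    exact sub_eq_zero.mp hz0
  -- u = A v  (= Ω_Λ z)
  set u : ↥Λ → ℝ := A.mulVec v with hu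
  have huz : ∀ j : ↥Λ, u j = Ω.mulVec z (j : Fin p) := by
    intro j
    rw [hu, hA, ← mulVec_mulVec, ← hzv, myRowSub_mulVec]
  have hune : u ≠ 0 := fun h => hvne (hfullrank v (hA ▸ h))
  obtain ⟨j₀, hj₀⟩ := Function.ne_iff.mp hune
  simp only [Pi.zero_apply] at hj₀
  -- G is invertible
  have hGdet : IsUnit G.det := by
    rw [isUnit_iff_ne_zero]
    intro hdet
    obtain ⟨w, hwne, hw⟩ := (Matrix.exists_mulVec_eq_zero_iff).mpr hdet
    apply hwne
    apply hfullrank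
    have h0 : w ⬝ᵥ G.mulVec w = 0 := by rw [hw, dotProduct_zero]
    rw [hGA, ← mulVec_mulVec, dotProduct_mulVec, vecMul_transpose,
      dotProduct_self_eq_zero] at h0
    exact hA ▸ h0
  -- the sign vector and the correlation vector c
  set s' : ↥Λᶜ → ℝ := fun i => Real.sign (Ω.mulVec x₀ (i : Fin p)) with hs'
  set C : Matrix (Fin (d - m)) ↥Λᶜ ℝ := B * (rowSub Ω Λᶜ).transpose with hC
  set c : ↥Λ → ℝ := (pinvP Ω Λ B * C).mulVec s' with hc
  have hcb : ∀ j : ↥Λ, |c j| < 1 := fun j => hERC x₀ hx₀ j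
  -- key identity : ∑ over Λᶜ of s' * Ωz  =  c ⬝ᵥ u
  have hkey : (∑ i : ↥Λᶜ, s' i * Ω.mulVec z (i : Fin p)) = c ⬝ᵥ u := by
    have hcAG : c = A.mulVec (G⁻¹.mulVec (C.mulVec s')) := by
      rw [hc, mulVec_mulVec, mulVec_mulVec]
      rfl
    have hT : (∑ i : ↥Λᶜ, s' i * Ω.mulVec z (i : Fin p)) = (C.mulVec s') ⬝ᵥ v := by
      have hvm : vecMul v C = fun i : ↥Λᶜ => Ω.mulVec z (i : Fin p) := by
        funext i
        rw [hC, ← vecMul_vecMul, ← mulVec_transpose, ← mulVec_transpose,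
          transpose_transpose, ← hzv, myRowSub_mulVec]
      rw [dotProduct_comm, dotProduct_mulVec, hvm]
      simp [dotProduct, mul_comm]
    rw [hT, hcAG, hu]
    rw [dotProduct_mulVec (A.mulVec (G⁻¹.mulVec (C.mulVec s'))) A v,
      ← mulVec_transpose, mulVec_mulVec, mulVec_mulVec, ← hGA,
      Matrix.mul_nonsing_inv G hGdet, one_mulVec]
  -- split the sums over Λ and Λᶜ
  have hsplit0 : ∑ i, |Ω.mulVec x₀ i| = ∑ i ∈ Λᶜ, |Ω.mulVec x₀ i| := by
    rw [← Finset.sum_add_sum_compl Λ]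
    have : ∑ i ∈ Λ, |Ω.mulVec x₀ i| = 0 :=
      Finset.sum_eq_zero fun i hi => by rw [hx₀ i hi, abs_zero]
    rw [this, zero_add]
  have hsplitx : ∑ i, |Ω.mulVec x i| = ∑ i ∈ Λ, |Ω.mulVec x i| + ∑ i ∈ Λᶜ, |Ω.mulVec x i| :=
    (Finset.sum_add_sum_compl Λ _).symm
  have hxz : ∀ i : Fin p, Ω.mulVec x i = Ω.mulVec x₀ i + Ω.mulVec z i := by
    intro i
    have : x = x₀ + z := by rw [hz]; ring
    rw [this, mulVec_add]
    simp
  -- sum over Λ of |Ωx| equals ∑ |u j|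
  have hLsum : ∑ i ∈ Λ, |Ω.mulVec x i| = ∑ j : ↥Λ, |u j| := by
    rw [← Finset.sum_coe_sort Λ (fun i => |Ω.mulVec x i|)]
    refine Finset.sum_congr rfl fun j _ => ?_
    rw [hxz, hx₀ j j.2, zero_add, huz]
  -- per-coordinate bound on Λᶜ
  have hLc : ∑ i ∈ Λᶜ, |Ω.mulVec x₀ i| + (∑ i : ↥Λᶜ, s' i * Ω.mulVec z (i : Fin p))
      ≤ ∑ i ∈ Λᶜ, |Ω.mulVec x i| := by
    rw [Finset.sum_coe_sort Λᶜ (fun i => Real.sign (Ω.mulVec x₀ i) * Ω.mulVec z i),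
      ← Finset.sum_add_distrib]
    refine Finset.sum_le_sum fun i _ => ?_
    rw [hxz]
    set a := Ω.mulVec x₀ i
    set b := Ω.mulVec z i
    have h1 : Real.sign a * a = |a| := mySign_mul_self a
    have h2 : |Real.sign a| ≤ 1 := myAbs_sign_le a
    have h3 : Real.sign a * (a + b) ≤ |a + b| := by
      calc Real.sign a * (a + b) ≤ |Real.sign a * (a + b)| := le_abs_self _
        _ = |Real.sign a| * |a + b| := abs_mul _ _
        _ ≤ 1 * |a + b| := by
            exact mul_le_mul_of_nonneg_right h2 (abs_nonneg _)
        _ = |a + b| := one_mul _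
    nlinarith [h3]
  -- the strict positivity
  have hpos : 0 < ∑ j : ↥Λ, |u j| + c ⬝ᵥ u := by
    have : ∑ j : ↥Λ, |u j| + c ⬝ᵥ u = ∑ j : ↥Λ, (|u j| + c j * u j) := by
      rw [Finset.sum_add_distrib]; rfl
    rw [this]
    refine Finset.sum_pos' (fun j _ => ?_) ⟨j₀, Finset.mem_univ _, ?_⟩
    · nlinarith [abs_nonneg (u j), abs_mul (c j) (u j), neg_abs_le (c j * u j),
        (hcb j).le, abs_nonneg (c j)]
    · have h1 : |u j₀| > 0 := abs_pos.mpr hj₀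
      nlinarith [abs_mul (c j₀) (u j₀), neg_abs_le (c j₀ * u j₀), hcb j₀, abs_nonneg (c j₀)]
  -- put everything together
  calc ∑ i, |Ω.mulVec x₀ i| = ∑ i ∈ Λᶜ, |Ω.mulVec x₀ i| := hsplit0
    _ < ∑ i ∈ Λᶜ, |Ω.mulVec x₀ i| + (∑ j : ↥Λ, |u j| + c ⬝ᵥ u) := by linarith
    _ = ∑ j : ↥Λ, |u j| + (∑ i ∈ Λᶜ, |Ω.mulVec x₀ i|
          + (∑ i : ↥Λᶜ, s' i * Ω.mulVec z (i : Fin p))) := by rw [hkey]; ring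
    _ ≤ ∑ i ∈ Λ, |Ω.mulVec x i| + ∑ i ∈ Λᶜ, |Ω.mulVec x i| := by
        rw [hLsum]; linarith
    _ = ∑ i, |Ω.mulVec x i| := hsplitx.symm
end

section
/- Let M ∈ ℝ^{m×d} with m < d, Ω ∈ ℝ^{p×d}, Λ ⊆ {1,…,p} with |Λ| = ℓ ≥ d−m, and let B ∈ ℝ^{(d−m)×d} be a matrix whose rows form a basis of Null(M). Assume Ω_Λ Bᵀ has full column rank d−m and set P := Ω_Λ Bᵀ (B Ω_Λᵀ Ω_Λ Bᵀ)⁻¹. If the ∞→∞ operator norm of the matrix P · B Ω_{Λᶜ}ᵀ (equal to the maximum over its rows of the ℓ¹-norm of the row) is strictly less than 1, then for every x ∈ ℝ^d with Ω_Λ x = 0 one has ‖P · B Ω_{Λᶜ}ᵀ · sign(Ω_{Λᶜ} x)‖_∞ < 1; consequently every x₀ with Ω_Λ x₀ = 0 is the unique minimizer of ‖Ωx‖₁ subject to Mx = Mx₀. -/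
open Matrix Finset

lemma abs_real_sign_le_one (t : ℝ) : |Real.sign t| ≤ 1 := by
  rcases Real.sign_apply_eq t with h | h | h <;> rw [h] <;> norm_num

lemma real_sign_mul_self (t : ℝ) : Real.sign t * t = |t| := by
  rcases lt_trichotomy t 0 with h | h | h
  · rw [Real.sign_of_neg h, abs_of_neg h]; ring
  · simp [h]
  · rw [Real.sign_of_pos h, abs_of_pos h]; ring

lemma abs_add_sign (a b : ℝ) : |a| + Real.sign a * b ≤ |a + b| := by
  have h1 : Real.sign a * (a + b) ≤ |a + b| :=
    calc Real.sign a * (a + b) ≤ |Real.sign a * (a + b)| := le_abs_self _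
      _ = |Real.sign a| * |a + b| := abs_mul _ _
      _ ≤ 1 * |a + b| := mul_le_mul_of_nonneg_right (abs_real_sign_le_one a) (abs_nonneg _)
      _ = |a + b| := one_mul _
  calc |a| + Real.sign a * b = Real.sign a * (a + b) := by
        rw [← real_sign_mul_self a]; ring
    _ ≤ |a + b| := h1

/-- analysis ERC: if the ∞→∞ operator norm of `P · B Ω_{Λᶜ}ᵀ`
(the maximum over rows of the ℓ¹-norm of the row) is `< 1`, then
`‖P · B Ω_{Λᶜ}ᵀ · sign(Ω_{Λᶜ} x)‖_∞ < 1` for every `x` with `Ω_Λ x = 0`, and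
consequently every `x₀` with `Ω_Λ x₀ = 0` is the unique minimizer of `‖Ωx‖₁`
subject to `Mx = Mx₀`. -/
theorem analysis_ERC_implies_l1_recovery
    {m d p ℓ : ℕ} (hmd : m < d)
    (M : Matrix (Fin m) (Fin d) ℝ) (Ω : Matrix (Fin p) (Fin d) ℝ)
    (Λ : Finset (Fin p)) (hcard : Λ.card = ℓ) (hℓ : d - m ≤ ℓ)
    (B : Matrix (Fin (d - m)) (Fin d) ℝ)
    (hBnull : ∀ i : Fin (d - m), M.mulVec (B i) = 0)
    (hBli : LinearIndependent ℝ (fun i : Fin (d - m) => B i))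
    (hBspan : ∀ z : Fin d → ℝ, M.mulVec z = 0 →
      z ∈ Submodule.span ℝ (Set.range fun i : Fin (d - m) => B i))
    (hfullrank : ∀ v : Fin (d - m) → ℝ, (rowSub Ω Λ * B.transpose).mulVec v = 0 → v = 0)
    (hERC : ∀ j : ↥Λ,
      ∑ i : ↥Λᶜ, |(pinvP Ω Λ B * (B * (rowSub Ω Λᶜ).transpose)) j i| < 1) :
    (∀ x : Fin d → ℝ, (∀ i ∈ Λ, Ω.mulVec x i = 0) →
      ∀ j : ↥Λ,
        |(pinvP Ω Λ B * (B * (rowSub Ω Λᶜ).transpose)).mulVec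
            (fun i : ↥Λᶜ => Real.sign (Ω.mulVec x (i : Fin p))) j| < 1)
    ∧
    (∀ x₀ : Fin d → ℝ, (∀ i ∈ Λ, Ω.mulVec x₀ i = 0) →
      ∀ x : Fin d → ℝ, x ≠ x₀ → M.mulVec x = M.mulVec x₀ →
        ∑ i, |Ω.mulVec x₀ i| < ∑ i, |Ω.mulVec x i|) := by
  set Q := pinvP Ω Λ B * (B * (rowSub Ω Λᶜ).transpose) with hQ
  -- Part 1
  have part1 : ∀ x : Fin d → ℝ, (∀ i ∈ Λ, Ω.mulVec x i = 0) →
      ∀ j : ↥Λ,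
        |Q.mulVec (fun i : ↥Λᶜ => Real.sign (Ω.mulVec x (i : Fin p))) j| < 1 := by
    intro x _ j
    refine lt_of_le_of_lt ?_ (hERC j)
    have : Q.mulVec (fun i : ↥Λᶜ => Real.sign (Ω.mulVec x (i : Fin p))) j
        = ∑ i : ↥Λᶜ, Q j i * Real.sign (Ω.mulVec x (i : Fin p)) := rfl
    rw [this]
    refine (Finset.abs_sum_le_sum_abs _ _).trans ?_
    apply Finset.sum_le_sum
    intro i _
    rw [abs_mul]
    exact mul_le_of_le_one_right (abs_nonneg _) (abs_real_sign_le_one _)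
  refine ⟨part1, ?_⟩
  -- notation
  set A := rowSub Ω Λ * B.transpose with hA
  set G := (B * (rowSub Ω Λ).transpose) * (rowSub Ω Λ * B.transpose) with hG
  have hGA : G = A.transpose * A := by
    rw [hG, hA, transpose_mul, transpose_transpose]
  have hGsymm : G.transpose = G := by
    rw [hGA, transpose_mul, transpose_transpose]
  -- G is invertible
  have hGunit : IsUnit G := by
    rw [← Matrix.mulVec_injective_iff_isUnit]
    intro a b hab
    have hab0 : G.mulVec (a - b) = 0 := by
      rw [Matrix.mulVec_sub, hab, sub_self]
    have hAab : A.mulVec (a - b) = 0 := by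
      have hdz : A.mulVec (a - b) ⬝ᵥ A.mulVec (a - b) = 0 := by
        have : (a - b) ⬝ᵥ G.mulVec (a - b) = 0 := by rw [hab0, dotProduct_zero]
        rw [hGA, ← Matrix.mulVec_mulVec, Matrix.dotProduct_mulVec,
          Matrix.vecMul_transpose] at this
        exact this
      exact dotProduct_self_eq_zero.mp hdz
    exact sub_eq_zero.mp (hfullrank (a - b) hAab)
  have hGdet : IsUnit G.det := (Matrix.isUnit_iff_isUnit_det G).mp hGunit
  set P := pinvP Ω Λ B with hP
  have hPdef : P = A * G⁻¹ := rfl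
  have hPtA : P.transpose * A = 1 := by
    rw [hPdef, transpose_mul, Matrix.transpose_nonsing_inv, hGsymm,
      Matrix.mul_assoc, ← hGA, Matrix.nonsing_inv_mul G hGdet]
  -- Part 2
  intro x₀ h0 x hne hMx
  set h := x - x₀ with hh
  have hMh : M.mulVec h = 0 := by
    rw [hh, Matrix.mulVec_sub, hMx, sub_self]
  obtain ⟨v, hv⟩ := (Submodule.mem_span_range_iff_exists_fun ℝ).mp (hBspan h hMh)
  have hBv : B.transpose.mulVec v = h := by
    funext j
    rw [← hv]
    simp [Matrix.mulVec, dotProduct, Matrix.transpose_apply, Finset.sum_apply,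
      mul_comm]
  have hhne : h ≠ 0 := sub_ne_zero.mpr hne
  set u := A.mulVec v with hu
  have huΩ : ∀ j : ↥Λ, u j = Ω.mulVec h (j : Fin p) := by
    intro j
    rw [hu, hA, ← Matrix.mulVec_mulVec, hBv]
    rfl
  have hune : u ≠ 0 := by
    intro h0u
    apply hhne
    have hv0 : v = 0 := hfullrank v (hu.symm.trans h0u)
    rw [← hBv, hv0, Matrix.mulVec_zero]
  have hvPu : v = P.transpose.mulVec u := by
    rw [hu, Matrix.mulVec_mulVec, hPtA, Matrix.one_mulVec]
  -- sign vector and q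
  set s := fun i : ↥Λᶜ => Real.sign (Ω.mulVec x₀ (i : Fin p)) with hs
  set q := Q.mulVec s with hq
  have hqlt : ∀ j : ↥Λ, |q j| < 1 := part1 x₀ h0
  -- cross term identity
  have hcross : ∑ i : ↥Λᶜ, s i * Ω.mulVec h (i : Fin p) = q ⬝ᵥ u := by
    have e1 : ∑ i : ↥Λᶜ, s i * Ω.mulVec h (i : Fin p)
        = s ⬝ᵥ (rowSub Ω Λᶜ * B.transpose).mulVec v := by
      rw [← Matrix.mulVec_mulVec, hBv]
      rfl
    rw [e1, Matrix.dotProduct_mulVec, ← Matrix.mulVec_transpose, hvPu,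
      Matrix.dotProduct_mulVec, ← Matrix.mulVec_transpose, transpose_transpose,
      ]
    congr 1
    rw [Matrix.mulVec_mulVec, transpose_mul, transpose_transpose, hq, hQ]
  -- key positivity
  have hkey : 0 < ∑ j : ↥Λ, |u j| + q ⬝ᵥ u := by
    obtain ⟨j₀, hj₀⟩ := Function.ne_iff.mp hune
    have h2 : ∑ j : ↥Λ, |q j| * |u j| < ∑ j : ↥Λ, |u j| := by
      refine Finset.sum_lt_sum (fun j _ => ?_) ⟨j₀, Finset.mem_univ _, ?_⟩
      · exact mul_le_of_le_one_left (abs_nonneg _) (le_of_lt (hqlt j))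
      · calc |q j₀| * |u j₀| < 1 * |u j₀| :=
              mul_lt_mul_of_pos_right (hqlt j₀) (abs_pos.mpr hj₀)
          _ = |u j₀| := one_mul _
    have h1 : |q ⬝ᵥ u| ≤ ∑ j : ↥Λ, |q j| * |u j| := by
      refine (Finset.abs_sum_le_sum_abs _ _).trans ?_
      apply Finset.sum_le_sum
      intro j _
      rw [abs_mul]
    have := neg_abs_le (q ⬝ᵥ u)
    linarith
  -- decompose the sums
  have hΩx : ∀ i, Ω.mulVec x i = Ω.mulVec x₀ i + Ω.mulVec h i := by
    intro i
    have := congrFun (Ω.mulVec_sub x x₀) i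
    rw [hh]
    simp only [Pi.sub_apply] at this
    rw [this]; ring
  rw [← Finset.sum_add_sum_compl Λ (fun i => |Ω.mulVec x₀ i|),
    ← Finset.sum_add_sum_compl Λ (fun i => |Ω.mulVec x i|)]
  have hz : ∑ i ∈ Λ, |Ω.mulVec x₀ i| = 0 := by
    refine Finset.sum_eq_zero fun i hi => ?_
    rw [h0 i hi, abs_zero]
  have hΛ : ∑ i ∈ Λ, |Ω.mulVec x i| = ∑ j : ↥Λ, |u j| := by
    rw [← Finset.sum_coe_sort Λ (fun i => |Ω.mulVec x i|)]
    refine Finset.sum_congr rfl fun j _ => ?_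
    rw [hΩx, h0 _ j.2, zero_add, huΩ j]
  have hΛc : ∑ i ∈ Λᶜ, |Ω.mulVec x₀ i| + q ⬝ᵥ u ≤ ∑ i ∈ Λᶜ, |Ω.mulVec x i| := by
    rw [← hcross]
    rw [← Finset.sum_coe_sort Λᶜ (fun i => |Ω.mulVec x₀ i|),
      ← Finset.sum_coe_sort Λᶜ (fun i => |Ω.mulVec x i|),
      ← Finset.sum_add_distrib]
    refine Finset.sum_le_sum fun i _ => ?_
    rw [hΩx, hs]
    exact abs_add_sign _ _
  rw [hz, hΛ]
  linarith
end

section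
/- Let M ∈ ℝ^{m×d} with m < d, Ω ∈ ℝ^{p×d}, Λ ⊆ {1,…,p} with |Λ| = ℓ ≥ d−m, and let B ∈ ℝ^{(d−m)×d} be a matrix whose rows form a basis of Null(M). Assume the ℓ×(d−m) matrix Ω_Λ Bᵀ has full column rank d−m, and set P := Ω_Λ Bᵀ (B Ω_Λᵀ Ω_Λ Bᵀ)⁻¹. Let x₀ ∈ ℝ^d satisfy Ω_Λ x₀ = 0, let y = M x₀, and let x̂ ∈ ℝ^d be a minimizer of ‖Ωx‖₂ subject to Mx = y (i.e., M x̂ = y and ‖Ω x̂‖₂ ≤ ‖Ωx‖₂ for every x with Mx = y). Then Ω_Λ x̂ = − P · B Ω_{Λᶜ}ᵀ · Ω_{Λᶜ} x̂. -/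
open Matrix Finset

/-- for `x₀` with `Ω_Λ x₀ = 0` and `xh` a minimizer of `‖Ωx‖₂`
subject to `Mx = Mx₀`, one has `Ω_Λ xh = − P · B Ω_{Λᶜ}ᵀ · Ω_{Λᶜ} xh`. -/
theorem GAP_coefficient_relation
    {m d p ℓ : ℕ} (hmd : m < d)
    (M : Matrix (Fin m) (Fin d) ℝ) (Ω : Matrix (Fin p) (Fin d) ℝ)
    (Λ : Finset (Fin p)) (hcard : Λ.card = ℓ) (hℓ : d - m ≤ ℓ)
    (B : Matrix (Fin (d - m)) (Fin d) ℝ)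
    (hBnull : ∀ i : Fin (d - m), M.mulVec (B i) = 0)
    (hBli : LinearIndependent ℝ (fun i : Fin (d - m) => B i))
    (hBspan : ∀ z : Fin d → ℝ, M.mulVec z = 0 →
      z ∈ Submodule.span ℝ (Set.range fun i : Fin (d - m) => B i))
    (hfullrank : ∀ v : Fin (d - m) → ℝ, (rowSub Ω Λ * B.transpose).mulVec v = 0 → v = 0)
    (x₀ : Fin d → ℝ) (hx₀ : ∀ i ∈ Λ, Ω.mulVec x₀ i = 0)
    (xh : Fin d → ℝ) (hfeas : M.mulVec xh = M.mulVec x₀)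
    (hmin : ∀ x : Fin d → ℝ, M.mulVec x = M.mulVec x₀ →
      Real.sqrt (∑ i, (Ω.mulVec xh i) ^ 2) ≤ Real.sqrt (∑ i, (Ω.mulVec x i) ^ 2)) :
    (rowSub Ω Λ).mulVec xh =
      -((pinvP Ω Λ B * (B * (rowSub Ω Λᶜ).transpose)).mulVec
          ((rowSub Ω Λᶜ).mulVec xh)) := by
  classical
  set A := rowSub Ω Λ with hA
  set C := rowSub Ω Λᶜ with hC
  set G := (B * A.transpose) * (A * B.transpose) with hG
  -- Step A : A.mulVec x₀ = 0
  have hAx₀ : A.mulVec x₀ = 0 := by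
    funext i
    have h := hx₀ (i : Fin p) i.2
    simpa [hA, rowSub, Matrix.mulVec, dotProduct] using h
  -- Step B : xh = x₀ + Bᵀ t
  have hnull : M.mulVec (xh - x₀) = 0 := by
    rw [Matrix.mulVec_sub, hfeas, sub_self]
  obtain ⟨t, ht⟩ := Submodule.mem_span_range_iff_exists_fun ℝ |>.mp (hBspan _ hnull)
  have hxh : xh = x₀ + B.transpose.mulVec t := by
    have hBt : B.transpose.mulVec t = ∑ i, t i • B i := by
      funext j
      simp [Matrix.mulVec, dotProduct, Matrix.transpose_apply, Finset.sum_apply,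
        mul_comm]
    rw [hBt, ht]
    abel
  -- Step C : optimality gives ⟨Ω xh, Ω w⟩ = 0 for all w ∈ Null M
  have hopt : ∀ w : Fin d → ℝ, M.mulVec w = 0 →
      ∑ i, Ω.mulVec xh i * Ω.mulVec w i = 0 := by
    intro w hw
    set u := Ω.mulVec xh with hu
    set w' := Ω.mulVec w with hw'
    set a := ∑ i, (w' i) ^ 2 with ha
    set b := ∑ i, u i * w' i with hb
    have ha0 : 0 ≤ a := Finset.sum_nonneg fun i _ => sq_nonneg _
    have hq : ∀ s : ℝ, 0 ≤ s * (2 * b) + s ^ 2 * a := by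
      intro s
      have hfe : M.mulVec (xh + s • w) = M.mulVec x₀ := by
        rw [Matrix.mulVec_add, Matrix.mulVec_smul, hw, hfeas]
        simp
      have hle := hmin _ hfe
      have hexp : ∑ i, (Ω.mulVec (xh + s • w) i) ^ 2
          = (∑ i, (u i) ^ 2) + (s * (2 * b) + s ^ 2 * a) := by
        have h1 : Ω.mulVec (xh + s • w) = fun i => u i + s * w' i := by
          funext i
          simp [Matrix.mulVec_add, Matrix.mulVec_smul, hu, hw']
        rw [h1, ha, hb, Finset.mul_sum, Finset.mul_sum, Finset.mul_sum]
        rw [← Finset.sum_add_distrib, ← Finset.sum_add_distrib]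
        exact Finset.sum_congr rfl fun i _ => by ring
      rw [hexp] at hle
      have hle' := (Real.sqrt_le_sqrt_iff (by
        calc (0:ℝ) ≤ ∑ i, (u i + s * w' i) ^ 2 :=
              Finset.sum_nonneg fun i _ => sq_nonneg _
          _ = (∑ i, (u i) ^ 2) + (s * (2 * b) + s ^ 2 * a) := by
              rw [Finset.mul_sum, Finset.mul_sum, Finset.mul_sum,
                ← Finset.sum_add_distrib, ← Finset.sum_add_distrib]
              exact Finset.sum_congr rfl fun i _ => by ring)).mp hle
      linarith
    have hb0 : b = 0 := by
      have hs := hq (-(2 * b) / (a + 1))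
      have hpos : (0:ℝ) < a + 1 := by linarith
      have hEq : (-(2 * b) / (a + 1)) * (2 * b) + (-(2 * b) / (a + 1)) ^ 2 * a
          = -((2 * b) ^ 2 / (a + 1) ^ 2) := by
        field_simp
        ring
      rw [hEq] at hs
      have h4 : 0 ≤ (2 * b) ^ 2 / (a + 1) ^ 2 := by positivity
      have h5 : (2 * b) ^ 2 / (a + 1) ^ 2 = 0 := by linarith
      field_simp at h5
      nlinarith
    exact hb0
  -- key vector equation : (B Ωᵀ)(Ω xh) = 0
  have hkey : (B * Ω.transpose).mulVec (Ω.mulVec xh) = 0 := by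
    funext j
    have h := hopt (B j) (hBnull j)
    have e : (B * Ω.transpose).mulVec (Ω.mulVec xh) j
        = (Ω.mulVec xh) ⬝ᵥ (Ω.mulVec (B j)) := by
      rw [← Matrix.mulVec_mulVec, Matrix.dotProduct_mulVec, ← Matrix.mulVec_transpose,
        dotProduct_comm]
      rfl
    simp only [Pi.zero_apply]
    rw [e]
    exact h
  -- decomposition of the Gram matrix
  have hdecomp : A.transpose * A + C.transpose * C = Ω.transpose * Ω := by
    ext a b
    simp only [Matrix.add_apply, Matrix.mul_apply, Matrix.transpose_apply, hA, hC, rowSub,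
      Matrix.submatrix_apply, id]
    rw [Finset.sum_coe_sort Λ (fun i => Ω i a * Ω i b),
      Finset.sum_coe_sort Λᶜ (fun i => Ω i a * Ω i b)]
    exact Finset.sum_add_sum_compl Λ _
  have hsplit : (B * A.transpose).mulVec (A.mulVec xh)
      + (B * C.transpose).mulVec (C.mulVec xh) = 0 := by
    have e1 : (B * A.transpose).mulVec (A.mulVec xh)
        = (B * (A.transpose * A)).mulVec xh := by
      rw [Matrix.mulVec_mulVec, Matrix.mul_assoc]
    have e2 : (B * C.transpose).mulVec (C.mulVec xh)
        = (B * (C.transpose * C)).mulVec xh := by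
      rw [Matrix.mulVec_mulVec, Matrix.mul_assoc]
    rw [e1, e2, ← Matrix.add_mulVec, ← Matrix.mul_add, hdecomp, ← Matrix.mul_assoc,
      ← Matrix.mulVec_mulVec]
    exact hkey
  -- invertibility of G
  have hGtrans : B * A.transpose = (A * B.transpose).transpose := by
    rw [Matrix.transpose_mul, Matrix.transpose_transpose]
  have hGinj : ∀ v, G.mulVec v = 0 → v = 0 := by
    intro v hv
    apply hfullrank
    have h1 : v ⬝ᵥ G.mulVec v = 0 := by rw [hv]; simp
    rw [hG, hGtrans, ← Matrix.mulVec_mulVec, Matrix.dotProduct_mulVec,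
      Matrix.vecMul_transpose] at h1
    exact dotProduct_self_eq_zero.mp h1
  have hdet : IsUnit G.det := by
    rw [isUnit_iff_ne_zero]
    intro h0
    obtain ⟨v, hv0, hv⟩ := Matrix.exists_mulVec_eq_zero_iff.mpr h0
    exact hv0 (hGinj v hv)
  -- final computation
  have hAxh : A.mulVec xh = (A * B.transpose).mulVec t := by
    rw [hxh, Matrix.mulVec_add, hAx₀, Matrix.mulVec_mulVec, zero_add]
  have hP : pinvP Ω Λ B = A * B.transpose * G⁻¹ := rfl
  rw [hP]
  have hC2 : (B * C.transpose).mulVec (C.mulVec xh)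
      = -((B * A.transpose).mulVec (A.mulVec xh)) := by
    linear_combination (norm := module) hsplit
  rw [← Matrix.mulVec_mulVec, hC2, Matrix.mulVec_neg, neg_neg, hAxh,
    Matrix.mulVec_mulVec, Matrix.mulVec_mulVec]
  have hfin : A * B.transpose * G⁻¹ * (B * A.transpose) * (A * B.transpose)
      = A * B.transpose := by
    rw [Matrix.mul_assoc (A * B.transpose * G⁻¹), ← hG, Matrix.mul_assoc,
      Matrix.nonsing_inv_mul G hdet, Matrix.mul_one]
  rw [hfin]
end

section
/- Let M ∈ ℝ^{m×d} with m < d, Ω ∈ ℝ^{p×d}, Λ ⊆ {1,…,p} with |Λ| = ℓ ≥ d−m, and let B ∈ ℝ^{(d−m)×d} be a matrix whose rows form a basis of Null(M). Assume Ω_Λ Bᵀ has full column rank d−m, set P := Ω_Λ Bᵀ (B Ω_Λᵀ Ω_Λ Bᵀ)⁻¹, and let C denote the ∞→∞ operator norm of P · B Ω_{Λᶜ}ᵀ. Let x₀ satisfy Ω_Λ x₀ = 0 and let x̂ be a minimizer of ‖Ωx‖₂ subject to Mx = M x₀. Then ‖Ω_Λ x̂‖_∞ ≤ C · ‖Ω_{Λᶜ}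 x̂‖_∞. In particular, if C < t ≤ 1 and Ω_{Λᶜ} x̂ ≠ 0, then every index i ∈ {1,…,p} with |(Ω x̂)_i| ≥ t · max_j |(Ω x̂)_j| belongs to Λᶜ (i.e., the first selection step of the Greedy Analysis Pursuit algorithm removes only rows outside the true cosupport Λ). -/
open Matrix Finset

lemma quad_coeff_zero {a b : ℝ} (ha : 0 ≤ a) (h : ∀ t : ℝ, 0 ≤ a * t ^ 2 + b * t) : b = 0 := by
  by_contra hb
  have hpos : (0:ℝ) < a + 1 := by linarith
  have hb2 : 0 < b ^ 2 := by positivity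
  have ht := h (-b / (a + 1))
  have heq : a * (-b / (a + 1)) ^ 2 + b * (-b / (a + 1)) = -(b ^ 2) / (a + 1) ^ 2 := by
    field_simp
    ring
  rw [heq] at ht
  have h2 : 0 ≤ (-(b ^ 2) / (a + 1) ^ 2) * (a + 1) ^ 2 :=
    mul_nonneg ht (by positivity)
  rw [div_mul_cancel₀] at h2
  · linarith
  · positivity

lemma le_fin_iSup {ι : Type*} [Fintype ι] (f : ι → ℝ) (i : ι) : f i ≤ ⨆ j, f j :=
  le_ciSup (Set.Finite.bddAbove (Set.finite_range f)) i

/-- with `C` the ∞→∞ operator norm of `P · B Ω_{Λᶜ}ᵀ` (the maximum over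
rows of the ℓ¹-norm of the row), if `xh` minimizes `‖Ωx‖₂` subject to `Mx = Mx₀`
where `Ω_Λ x₀ = 0`, then `‖Ω_Λ xh‖_∞ ≤ C · ‖Ω_{Λᶜ} xh‖_∞`; in particular if
`C < t ≤ 1` and `Ω_{Λᶜ} xh ≠ 0`, every index `i` with `|(Ω xh)_i| ≥ t · max_j |(Ω xh)_j|`
belongs to `Λᶜ`. -/
theorem GAP_first_step_correct
    {m d p ℓ : ℕ} (hmd : m < d)
    (M : Matrix (Fin m) (Fin d) ℝ) (Ω : Matrix (Fin p) (Fin d) ℝ)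
    (Λ : Finset (Fin p)) (hcard : Λ.card = ℓ) (hℓ : d - m ≤ ℓ)
    (B : Matrix (Fin (d - m)) (Fin d) ℝ)
    (hBnull : ∀ i : Fin (d - m), M.mulVec (B i) = 0)
    (hBli : LinearIndependent ℝ (fun i : Fin (d - m) => B i))
    (hBspan : ∀ z : Fin d → ℝ, M.mulVec z = 0 →
      z ∈ Submodule.span ℝ (Set.range fun i : Fin (d - m) => B i))
    (hfullrank : ∀ v : Fin (d - m) → ℝ, (rowSub Ω Λ * B.transpose).mulVec v = 0 → v = 0)
    (C : ℝ)
    (hC : C = ⨆ j : ↥Λ, ∑ i : ↥Λᶜ, |(pinvP Ω Λ B * (B * (rowSub Ω Λᶜ).transpose)) j i|)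
    (x₀ : Fin d → ℝ) (hx₀ : ∀ i ∈ Λ, Ω.mulVec x₀ i = 0)
    (xh : Fin d → ℝ) (hfeas : M.mulVec xh = M.mulVec x₀)
    (hmin : ∀ x : Fin d → ℝ, M.mulVec x = M.mulVec x₀ →
      Real.sqrt (∑ i, (Ω.mulVec xh i) ^ 2) ≤ Real.sqrt (∑ i, (Ω.mulVec x i) ^ 2)) :
    ((⨆ j : ↥Λ, |(rowSub Ω Λ).mulVec xh j|) ≤
        C * ⨆ i : ↥Λᶜ, |(rowSub Ω Λᶜ).mulVec xh i|)
    ∧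
    (∀ t : ℝ, C < t → t ≤ 1 → (rowSub Ω Λᶜ).mulVec xh ≠ 0 →
      ∀ i : Fin p, t * (⨆ j : Fin p, |Ω.mulVec xh j|) ≤ |Ω.mulVec xh i| → i ∈ Λᶜ) := by
  classical
  set A : Matrix ↥Λ (Fin (d - m)) ℝ := rowSub Ω Λ * B.transpose with hA
  set G : Matrix (Fin (d - m)) (Fin (d - m)) ℝ := (B * (rowSub Ω Λ).transpose) * A with hG
  set R : Matrix (Fin (d - m)) ↥Λᶜ ℝ := B * (rowSub Ω Λᶜ).transpose with hR
  set Q : Matrix ↥Λ ↥Λᶜ ℝ := pinvP Ω Λ B * R with hQ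
  set w : ↥Λᶜ → ℝ := (rowSub Ω Λᶜ).mulVec xh with hw
  -- first-order condition
  have foc : ∀ u : Fin d → ℝ, M.mulVec u = 0 →
      ∑ j, Ω.mulVec xh j * Ω.mulVec u j = 0 := by
    intro u hu
    have key : ∀ t : ℝ, 0 ≤ (∑ j, (Ω.mulVec u j) ^ 2) * t ^ 2 +
        (2 * ∑ j, Ω.mulVec xh j * Ω.mulVec u j) * t := by
      intro t
      have hfeas' : M.mulVec (xh + t • u) = M.mulVec x₀ := by
        rw [mulVec_add, mulVec_smul, hu, hfeas]; simp
      have h1 := hmin (xh + t • u) hfeas'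
      have hn1 : 0 ≤ ∑ i, (Ω.mulVec xh i) ^ 2 := Finset.sum_nonneg fun i _ => sq_nonneg _
      have hn2 : 0 ≤ ∑ i, (Ω.mulVec (xh + t • u) i) ^ 2 :=
        Finset.sum_nonneg fun i _ => sq_nonneg _
      have h2 : ∑ i, (Ω.mulVec xh i) ^ 2 ≤ ∑ i, (Ω.mulVec (xh + t • u) i) ^ 2 := by
        calc ∑ i, (Ω.mulVec xh i) ^ 2 = (Real.sqrt (∑ i, (Ω.mulVec xh i) ^ 2)) ^ 2 :=
              (Real.sq_sqrt hn1).symm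
          _ ≤ (Real.sqrt (∑ i, (Ω.mulVec (xh + t • u) i) ^ 2)) ^ 2 :=
              pow_le_pow_left₀ (Real.sqrt_nonneg _) h1 2
          _ = ∑ i, (Ω.mulVec (xh + t • u) i) ^ 2 := Real.sq_sqrt hn2
      have hent : ∀ i, Ω.mulVec (xh + t • u) i = Ω.mulVec xh i + t * Ω.mulVec u i := by
        intro i; rw [mulVec_add, mulVec_smul]; simp
      have hsum : (∑ j, (Ω.mulVec u j) ^ 2) * t ^ 2 +
          (2 * ∑ j, Ω.mulVec xh j * Ω.mulVec u j) * t =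
          ∑ j, ((Ω.mulVec xh j + t * Ω.mulVec u j) ^ 2 - (Ω.mulVec xh j) ^ 2) := by
        rw [Finset.sum_mul, Finset.mul_sum, Finset.sum_mul, ← Finset.sum_add_distrib]
        apply Finset.sum_congr rfl
        intro i _
        ring
      rw [hsum, Finset.sum_sub_distrib]
      simp_rw [hent] at h2
      linarith
    have := quad_coeff_zero (Finset.sum_nonneg fun i _ => sq_nonneg _) key
    linarith
  have grad : ∀ i : Fin (d - m), ∑ j, Ω.mulVec xh j * Ω.mulVec (B i) j = 0 :=
    fun i => foc (B i) (hBnull i)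
  -- decompose xh - x₀
  obtain ⟨v, hv⟩ : ∃ v : Fin (d - m) → ℝ, ∑ i, v i • B i = xh - x₀ := by
    have hz : M.mulVec (xh - x₀) = 0 := by rw [mulVec_sub, hfeas, sub_self]
    exact (Submodule.mem_span_range_iff_exists_fun ℝ).mp (hBspan (xh - x₀) hz)
  have hΩz : ∀ j : Fin p, Ω.mulVec xh j - Ω.mulVec x₀ j = ∑ i, v i * Ω.mulVec (B i) j := by
    intro j
    have h0 : Ω.mulVec (xh - x₀) j = ∑ i, v i * Ω.mulVec (B i) j := by
      rw [← hv]
      simp only [mulVec, dotProduct, Finset.sum_apply, Pi.smul_apply, smul_eq_mul,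
        Finset.mul_sum]
      rw [Finset.sum_comm]
      apply Finset.sum_congr rfl
      intro i _
      apply Finset.sum_congr rfl
      intro k _
      ring
    rw [← h0, mulVec_sub]
    rfl
  have hΛxh : ∀ j ∈ Λ, Ω.mulVec xh j = ∑ i, v i * Ω.mulVec (B i) j := by
    intro j hj
    have := hΩz j
    rw [hx₀ j hj, sub_zero] at this
    exact this
  -- matrix entries
  have hAent : ∀ (j : ↥Λ) (i : Fin (d - m)), A j i = Ω.mulVec (B i) (j : Fin p) := by
    intro j i
    simp only [hA, Matrix.mul_apply, rowSub, submatrix_apply, transpose_apply, id_eq,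
      mulVec, dotProduct]
  have hRent : ∀ (i : Fin (d - m)) (j : ↥Λᶜ), R i j = Ω.mulVec (B i) (j : Fin p) := by
    intro i j
    simp only [hR, Matrix.mul_apply, rowSub, submatrix_apply, transpose_apply, id_eq,
      mulVec, dotProduct]
    apply Finset.sum_congr rfl; intros; ring
  have hATent : ∀ (i : Fin (d - m)) (j : ↥Λ), (B * (rowSub Ω Λ).transpose) i j =
      Ω.mulVec (B i) (j : Fin p) := by
    intro i j
    simp only [Matrix.mul_apply, rowSub, submatrix_apply, transpose_apply, id_eq,
      mulVec, dotProduct]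
    apply Finset.sum_congr rfl; intros; ring
  have hGent : ∀ i i' : Fin (d - m), G i i' =
      ∑ j : ↥Λ, Ω.mulVec (B i) (j : Fin p) * Ω.mulVec (B i') (j : Fin p) := by
    intro i i'
    rw [hG, Matrix.mul_apply]
    exact Finset.sum_congr rfl fun j _ => by rw [hATent i j, hAent j i']
  -- the normal equation G v = -(R w)
  have hGv : G.mulVec v = -(R.mulVec w) := by
    funext i
    have hsplit := Finset.sum_add_sum_compl Λ (fun j => Ω.mulVec xh j * Ω.mulVec (B i) j)
    rw [grad i] at hsplit
    have hL : G.mulVec v i = ∑ j ∈ Λ, Ω.mulVec xh j * Ω.mulVec (B i) j := by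
      have e1 : G.mulVec v i = ∑ i', G i i' * v i' := rfl
      have e2 : ∀ i' : Fin (d - m), G i i' * v i' =
          ∑ j : ↥Λ, v i' * Ω.mulVec (B i') (j : Fin p) * Ω.mulVec (B i) (j : Fin p) := by
        intro i'
        rw [hGent i i', Finset.sum_mul]
        exact Finset.sum_congr rfl fun j _ => by ring
      calc G.mulVec v i = ∑ i', G i i' * v i' := e1
        _ = ∑ i' : Fin (d - m), ∑ j : ↥Λ,
              v i' * Ω.mulVec (B i') (j : Fin p) * Ω.mulVec (B i) (j : Fin p) :=
            Finset.sum_congr rfl fun i' _ => e2 i'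
        _ = ∑ j : ↥Λ, ∑ i' : Fin (d - m),
              v i' * Ω.mulVec (B i') (j : Fin p) * Ω.mulVec (B i) (j : Fin p) :=
            Finset.sum_comm
        _ = ∑ j : ↥Λ, Ω.mulVec xh (j : Fin p) * Ω.mulVec (B i) (j : Fin p) := by
            apply Finset.sum_congr rfl
            intro j _
            rw [hΛxh (j : Fin p) j.2, Finset.sum_mul]
        _ = ∑ j ∈ Λ, Ω.mulVec xh j * Ω.mulVec (B i) j :=
            Finset.sum_coe_sort Λ (fun j => Ω.mulVec xh j * Ω.mulVec (B i) j)
    have hRw : R.mulVec w i = ∑ j ∈ Λᶜ, Ω.mulVec xh j * Ω.mulVec (B i) j := by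
      have e1 : R.mulVec w i = ∑ j : ↥Λᶜ, R i j * w j := rfl
      rw [e1, ← Finset.sum_coe_sort Λᶜ (fun j => Ω.mulVec xh j * Ω.mulVec (B i) j)]
      apply Finset.sum_congr rfl
      intro j _
      rw [hRent i j]
      have hwj : w j = Ω.mulVec xh (j : Fin p) := rfl
      rw [hwj]
      ring
    simp only [Pi.neg_apply]
    rw [hL, hRw]
    linarith
  -- G is invertible
  have hdet : IsUnit G.det := by
    rw [isUnit_iff_ne_zero]
    intro h0
    obtain ⟨v0, hv0ne, hv0⟩ := (Matrix.exists_mulVec_eq_zero_iff).mpr h0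
    apply hv0ne
    apply hfullrank
    have hGT : G = A.transpose * A := by
      rw [hG, hA, transpose_mul, transpose_transpose]
    have h1 : dotProduct v0 (G.mulVec v0) = 0 := by rw [hv0]; simp
    have h2 : dotProduct v0 (G.mulVec v0) = ∑ j, (A.mulVec v0 j) ^ 2 := by
      rw [hGT, ← mulVec_mulVec, Matrix.dotProduct_mulVec, vecMul_transpose]
      simp [dotProduct, sq]
    rw [h2] at h1
    funext j
    have := (Finset.sum_eq_zero_iff_of_nonneg (fun j _ => sq_nonneg (A.mulVec v0 j))).mp h1
      j (Finset.mem_univ j)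
    exact pow_eq_zero_iff (n := 2) (by norm_num) |>.mp this
  -- solve for v and express Ω_Λ xh
  have hveq : v = -((G⁻¹ * R).mulVec w) := by
    have h3 : G⁻¹.mulVec (G.mulVec v) = v := by
      rw [mulVec_mulVec, Matrix.nonsing_inv_mul G hdet, one_mulVec]
    rw [← h3, hGv, mulVec_neg, mulVec_mulVec]
  have hQeq : Q = A * (G⁻¹ * R) := by
    rw [hQ, pinvP, ← hA, ← hG, Matrix.mul_assoc]
  have hkey : ∀ j : ↥Λ, (rowSub Ω Λ).mulVec xh j = -(Q.mulVec w j) := by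
    intro j
    have h1 : (rowSub Ω Λ).mulVec xh j = A.mulVec v j := by
      have e0 : (rowSub Ω Λ).mulVec xh j = Ω.mulVec xh (j : Fin p) := rfl
      rw [e0, hΛxh (j : Fin p) j.2]
      simp only [mulVec, dotProduct]
      apply Finset.sum_congr rfl
      intro i _
      rw [hAent j i, mul_comm]
      rfl
    rw [h1, hveq, mulVec_neg, mulVec_mulVec, ← hQeq]
    simp
  -- the bound
  have hwnn : 0 ≤ ⨆ i : ↥Λᶜ, |w i| := Real.iSup_nonneg fun i => abs_nonneg _
  have hCnn : 0 ≤ C := by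
    rw [hC]
    exact Real.iSup_nonneg fun j => Finset.sum_nonneg fun i _ => abs_nonneg _
  have hbound : ∀ j : ↥Λ, |(rowSub Ω Λ).mulVec xh j| ≤ C * ⨆ i : ↥Λᶜ, |w i| := by
    intro j
    rw [hkey j, abs_neg]
    calc |Q.mulVec w j| ≤ ∑ i : ↥Λᶜ, |Q j i * w i| := Finset.abs_sum_le_sum_abs _ _
      _ ≤ ∑ i : ↥Λᶜ, |Q j i| * ⨆ i' : ↥Λᶜ, |w i'| := by
          apply Finset.sum_le_sum
          intro i _
          rw [abs_mul]
          exact mul_le_mul_of_nonneg_left (le_fin_iSup (fun i' => |w i'|) i) (abs_nonneg _)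
      _ = (∑ i : ↥Λᶜ, |Q j i|) * ⨆ i' : ↥Λᶜ, |w i'| := (Finset.sum_mul _ _ _).symm
      _ ≤ C * ⨆ i' : ↥Λᶜ, |w i'| := by
          apply mul_le_mul_of_nonneg_right _ hwnn
          rw [hC]
          exact le_fin_iSup (fun j : ↥Λ => ∑ i : ↥Λᶜ, |Q j i|) j
  constructor
  · exact Real.iSup_le hbound (mul_nonneg hCnn hwnn)
  · intro t hCt ht1 hwne i hi
    rw [Finset.mem_compl]
    intro hiΛ
    have hwpos : 0 < ⨆ i' : ↥Λᶜ, |w i'| := by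
      obtain ⟨i0, hi0⟩ : ∃ i0, w i0 ≠ 0 := by
        by_contra hc
        push_neg at hc
        exact hwne (funext hc)
      exact lt_of_lt_of_le (abs_pos.mpr hi0) (le_fin_iSup (fun i' => |w i'|) i0)
    have h1 : |Ω.mulVec xh i| ≤ C * ⨆ i' : ↥Λᶜ, |w i'| := hbound ⟨i, hiΛ⟩
    have h2 : C * (⨆ i' : ↥Λᶜ, |w i'|) < t * ⨆ i' : ↥Λᶜ, |w i'| :=
      mul_lt_mul_of_pos_right hCt hwpos
    have h3 : (⨆ i' : ↥Λᶜ, |w i'|) ≤ ⨆ j : Fin p, |Ω.mulVec xh j| := by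
      apply Real.iSup_le _ (Real.iSup_nonneg fun j => abs_nonneg _)
      intro i'
      have e : |w i'| = |Ω.mulVec xh (i' : Fin p)| := rfl
      rw [e]
      exact le_fin_iSup (fun j => |Ω.mulVec xh j|) (i' : Fin p)
    have h4 : t * (⨆ i' : ↥Λᶜ, |w i'|) ≤ t * ⨆ j : Fin p, |Ω.mulVec xh j| :=
      mul_le_mul_of_nonneg_left h3 (le_trans hCnn hCt.le)
    linarith
end

section
/- Let M ∈ ℝ^{m×d}, Ω ∈ ℝ^{p×d}, and ℓ ∈ ℕ. For Λ ⊆ {1,…,p} let A_Λ = {x ∈ ℝ^d : Ω_Λ x = 0}, and call x ∈ ℝ^d ℓ-cosparse if Ω_Λ x = 0 for some Λ with |Λ| ≥ ℓ. Then the following three statements are equivalent: (1) for every y ∈ ℝ^m, if the linear system y = Mx admits an ℓ-cosparse solution, then this is the unique ℓ-cosparse solution; (2) M is injective on the union ⋃_{|Λ| ≥ ℓ} A_Λ, i.e., whenever x₁, x₂ are both ℓ-cosparse and M x₁ = M x₂ then x₁ = x₂; (3) (A_{Λ₁} + A_{Λ₂}) ∩ Null(M) = {0} for all Λ₁, Λ₂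 ⊆ {1,…,p} with |Λ₁| ≥ ℓ and |Λ₂| ≥ ℓ. -/
open Matrix Finset

/-- A vector `x` is `ℓ`-cosparse w.r.t. `Ω` if `Ω_Λ x = 0` for some `Λ` with `|Λ| ≥ ℓ`. -/
def Cosparse {p d : ℕ} (Ω : Matrix (Fin p) (Fin d) ℝ) (ℓ : ℕ) (x : Fin d → ℝ) : Prop :=
  ∃ Λ : Finset (Fin p), ℓ ≤ Λ.card ∧ ∀ i ∈ Λ, Ω.mulVec x i = 0

/-- equivalence of (1) uniqueness of ℓ-cosparse solutions of `y = Mx`,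
(2) injectivity of `M` on the union of the ℓ-cosparse analysis subspaces, and
(3) `(A_{Λ₁} + A_{Λ₂}) ∩ Null(M) = {0}` for all `|Λ₁|, |Λ₂| ≥ ℓ`. -/
theorem cosparse_uniqueness_tfae
    {m d p : ℕ} (M : Matrix (Fin m) (Fin d) ℝ) (Ω : Matrix (Fin p) (Fin d) ℝ) (ℓ : ℕ) :
    ((∀ y : Fin m → ℝ, ∀ x : Fin d → ℝ, Cosparse Ω ℓ x → M.mulVec x = y →
        ∀ x' : Fin d → ℝ, Cosparse Ω ℓ x' → M.mulVec x' = y → x' = x)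
      ↔
      (∀ x₁ x₂ : Fin d → ℝ, Cosparse Ω ℓ x₁ → Cosparse Ω ℓ x₂ →
        M.mulVec x₁ = M.mulVec x₂ → x₁ = x₂))
    ∧
    ((∀ x₁ x₂ : Fin d → ℝ, Cosparse Ω ℓ x₁ → Cosparse Ω ℓ x₂ →
        M.mulVec x₁ = M.mulVec x₂ → x₁ = x₂)
      ↔
      (∀ Λ₁ Λ₂ : Finset (Fin p), ℓ ≤ Λ₁.card → ℓ ≤ Λ₂.card →
        ∀ u v : Fin d → ℝ, (∀ i ∈ Λ₁, Ω.mulVec u i = 0) → (∀ i ∈ Λ₂, Ω.mulVec v i = 0) →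
          M.mulVec (u + v) = 0 → u + v = 0)) := by
  constructor
  · constructor
    · intro h x₁ x₂ h₁ h₂ he
      exact h (M.mulVec x₂) x₂ h₂ rfl x₁ h₁ he
    · intro h y x hx hxy x' hx' hx'y
      exact h x' x hx' hx (hx'y.trans hxy.symm)
  · constructor
    · intro h Λ₁ Λ₂ hc₁ hc₂ u v hu hv hM
      have hM' : M.mulVec u + M.mulVec v = 0 := by rwa [Matrix.mulVec_add] at hM
      have huv : u = -v := by
        apply h u (-v) ⟨Λ₁, hc₁, hu⟩ ⟨Λ₂, hc₂, fun i hi => by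
          rw [Matrix.mulVec_neg]; simp [hv i hi]⟩
        rw [Matrix.mulVec_neg]
        exact eq_neg_of_add_eq_zero_left hM'
      rw [huv]; simp
    · rintro h x₁ x₂ ⟨Λ₁, hc₁, h₁⟩ ⟨Λ₂, hc₂, h₂⟩ he
      have key := h Λ₁ Λ₂ hc₁ hc₂ x₁ (-x₂) h₁ (fun i hi => by
        rw [Matrix.mulVec_neg]; simp [h₂ i hi]) (by
        rw [Matrix.mulVec_add, Matrix.mulVec_neg, he, add_neg_cancel])
      have : x₁ - x₂ = 0 := by rw [sub_eq_add_neg]; exact key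
      exact sub_eq_zero.mp this
end

section
/- Let M ∈ ℝ^{m×d} have rank m, let Ω ∈ ℝ^{p×d}, and let Λ ⊆ {1,…,p}. Assume M and Ω_Λ are mutually independent in the sense that the row space of M and the row space of Ω_Λ intersect trivially: Range(Mᵀ) ∩ Range(Ω_Λᵀ) = {0}. Then Null(Ω_Λ) ∩ Null(M) = {0} (equivalently, the stacked matrix [M; Ω_Λ] is injective, so any x with Ω_Λ x = 0 is uniquely determined by y = Mx) if and only if dim Null(Ω_Λ) ≤ m. -/
open Matrix Finset

/-- if `M` has rank `m` and the row spaces of `M` and `Ω_Λ` intersect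
trivially, then `Null(Ω_Λ) ∩ Null(M) = {0}` iff `dim Null(Ω_Λ) ≤ m`. -/
theorem known_cosupport_uniqueness_iff
    {m d p : ℕ} (M : Matrix (Fin m) (Fin d) ℝ) (hrank : M.rank = m)
    (Ω : Matrix (Fin p) (Fin d) ℝ) (Λ : Finset (Fin p))
    (hindep : Submodule.span ℝ (Set.range fun j : Fin m => M j) ⊓
        Submodule.span ℝ (Set.range fun i : ↥Λ => Ω (i : Fin p)) = ⊥) :
    (LinearMap.ker (rowSub Ω Λ).mulVecLin ⊓ LinearMap.ker M.mulVecLin = ⊥)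
    ↔
    Module.finrank ℝ ↥(LinearMap.ker (rowSub Ω Λ).mulVecLin) ≤ m := by
  classical
  set A := rowSub Ω Λ with hA
  set N := Matrix.fromRows M A with hN
  -- kernel of N is intersection
  have hker : LinearMap.ker N.mulVecLin = LinearMap.ker M.mulVecLin ⊓ LinearMap.ker A.mulVecLin := by
    ext v
    simp only [LinearMap.mem_ker, Submodule.mem_inf, mulVecLin_apply, hN, fromRows_mulVec]
    constructor
    · intro h
      constructor
      · ext i; exact congrFun h (Sum.inl i)
      · ext i; exact congrFun h (Sum.inr i)
    · rintro ⟨h1, h2⟩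
      ext i; cases i with
      | inl i => simpa using congrFun h1 i
      | inr i => simpa using congrFun h2 i
  -- row span of N
  have hspan : Submodule.span ℝ (Set.range N) =
      Submodule.span ℝ (Set.range fun j : Fin m => M j) ⊔
      Submodule.span ℝ (Set.range fun i : ↥Λ => Ω (i : Fin p)) := by
    have : Set.range N = Set.range M ∪ Set.range A := by
      rw [hN]
      ext x
      constructor
      · rintro ⟨i, rfl⟩
        cases i with
        | inl i => exact Or.inl ⟨i, rfl⟩
        | inr i => exact Or.inr ⟨i, rfl⟩
      · rintro (⟨i, rfl⟩ | ⟨i, rfl⟩)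
        · exact ⟨Sum.inl i, rfl⟩
        · exact ⟨Sum.inr i, rfl⟩
    rw [this, Submodule.span_union]
    rfl
  -- rank N = m + rank A
  have hrankN : N.rank = m + A.rank := by
    rw [N.rank_eq_finrank_span_row, show N.row = N from rfl, hspan]
    have := Submodule.finrank_sup_add_finrank_inf_eq
      (Submodule.span ℝ (Set.range fun j : Fin m => M j))
      (Submodule.span ℝ (Set.range fun i : ↥Λ => Ω (i : Fin p)))
    rw [hindep, finrank_bot, add_zero] at this
    have hAr : (Submodule.span ℝ (Set.range fun i : ↥Λ => Ω (i : Fin p))) =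
        Submodule.span ℝ (Set.range A) := rfl
    rw [this, ← M.row_def, ← M.rank_eq_finrank_span_row, hrank, hAr, A.rank_eq_finrank_span_row]
    rfl
  have hdim : Module.finrank ℝ (Fin d → ℝ) = d := by simp
  have hrnA : A.rank + Module.finrank ℝ ↥(LinearMap.ker A.mulVecLin) = d := by
    have := LinearMap.finrank_range_add_finrank_ker A.mulVecLin
    rwa [hdim] at this
  have hrnN : N.rank + Module.finrank ℝ ↥(LinearMap.ker N.mulVecLin) = d := by
    have := LinearMap.finrank_range_add_finrank_ker N.mulVecLin
    rwa [hdim] at this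
  have hbot : (LinearMap.ker (rowSub Ω Λ).mulVecLin ⊓ LinearMap.ker M.mulVecLin = ⊥)
      ↔ Module.finrank ℝ ↥(LinearMap.ker N.mulVecLin) = 0 := by
    rw [hker, inf_comm]
    constructor
    · intro h; rw [h]; exact finrank_bot ℝ _
    · intro h
      exact Submodule.finrank_eq_zero.mp h
  rw [hbot]
  rw [hrankN] at hrnN
  omega
end

section
/- Consider the N×N grid graph with vertex set V = {1,…,N}² (so d = N² vertices) and edge set E of horizontally and vertically adjacent pairs. For every nonempty Λ ⊆ E, the subspace W_Λ = {x ∈ ℝ^V : x(u) = x(v) for every {u,v} ∈ Λ} (the null space of the finite difference operator restricted to Λ) satisfies dim W_Λ ≤ N² − |Λ|/2. Consequently, κ(ℓ) := max_{Λ ⊆ E, |Λ| ≥ ℓ} dim W_Λ ≤ N² − ℓ/2 for every 1 ≤ ℓ ≤ |E|. -/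
open Finset

/-- The N×N grid graph: vertices are `Fin N × Fin N`, with edges between pairs of
vertices that agree in one coordinate and differ by exactly 1 in the other. -/
def gridGraph (N : ℕ) : SimpleGraph (Fin N × Fin N) :=
  SimpleGraph.fromRel (fun u v =>
    (u.1 = v.1 ∧ (u.2 : ℕ) + 1 = (v.2 : ℕ)) ∨ (u.2 = v.2 ∧ (u.1 : ℕ) + 1 = (v.1 : ℕ)))

/-- The null space of the finite difference operator restricted to the edge set `Λ`. -/
def diffNullSpace {V : Type*} [Fintype V] [DecidableEq V] (Λ : Finset (Sym2 V)) :
    Submodule ℝ (V → ℝ) where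
  carrier := {x | ∀ u v : V, s(u, v) ∈ Λ → x u = x v}
  add_mem' := by
    intro a b ha hb u v h
    simp only [Pi.add_apply, ha u v h, hb u v h]
  zero_mem' := by
    intro u v h
    rfl
  smul_mem' := by
    intro c x hx u v h
    simp only [Pi.smul_apply, hx u v h]

namespace GridAux

variable {N : ℕ}

/-- Key for the lexicographic order on `Fin N × Fin N`. -/
def gkey (N : ℕ) (v : Fin N × Fin N) : ℕ := (v.1 : ℕ) * N + (v.2 : ℕ)

lemma gkey_lt_of_fst_lt {a b : Fin N × Fin N} (h : (a.1 : ℕ) < (b.1 : ℕ)) :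
    gkey N a < gkey N b := by
  have h2 : (a.2 : ℕ) < N := a.2.isLt
  have : ((a.1 : ℕ) + 1) * N ≤ (b.1 : ℕ) * N := Nat.mul_le_mul_right N h
  unfold gkey
  calc (a.1 : ℕ) * N + (a.2 : ℕ) < (a.1 : ℕ) * N + N := by omega
    _ = ((a.1 : ℕ) + 1) * N := by ring
    _ ≤ (b.1 : ℕ) * N := this
    _ ≤ (b.1 : ℕ) * N + (b.2 : ℕ) := Nat.le_add_right _ _

lemma gkey_inj {a b : Fin N × Fin N} (h : gkey N a = gkey N b) : a = b := by
  rcases lt_trichotomy ((a.1 : ℕ)) ((b.1 : ℕ)) with h1 | h1 | h1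
  · exact absurd h (Nat.ne_of_lt (gkey_lt_of_fst_lt h1))
  · have hf : a.1 = b.1 := Fin.ext h1
    unfold gkey at h
    rw [h1] at h
    have h2 : (a.2 : ℕ) = (b.2 : ℕ) := by omega
    exact Prod.ext hf (Fin.ext h2)
  · exact absurd h.symm (Nat.ne_of_lt (gkey_lt_of_fst_lt h1))

def gtop (N : ℕ) : Sym2 (Fin N × Fin N) → Fin N × Fin N :=
  Sym2.lift ⟨fun a b => if gkey N a ≤ gkey N b then b else a, by
    intro a b
    dsimp only
    rcases le_or_gt (gkey N a) (gkey N b) with h | h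
    · rcases lt_or_ge (gkey N a) (gkey N b) with h' | h'
      · rw [if_pos h, if_neg (not_le.mpr h')]
      · rw [gkey_inj (le_antisymm h h')]
    · rw [if_neg (not_le.mpr h), if_pos h.le]⟩

def gbot (N : ℕ) : Sym2 (Fin N × Fin N) → Fin N × Fin N :=
  Sym2.lift ⟨fun a b => if gkey N a ≤ gkey N b then a else b, by
    intro a b
    dsimp only
    rcases le_or_gt (gkey N a) (gkey N b) with h | h
    · rcases lt_or_ge (gkey N a) (gkey N b) with h' | h'
      · rw [if_pos h, if_neg (not_le.mpr h')]
      · rw [gkey_inj (le_antisymm h h')]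
    · rw [if_neg (not_le.mpr h), if_pos h.le]⟩

/-- predicate: u is the "lower" grid-neighbor of v -/
def below (N : ℕ) (u v : Fin N × Fin N) : Prop :=
  (u.1 = v.1 ∧ (u.2 : ℕ) + 1 = (v.2 : ℕ)) ∨ (u.2 = v.2 ∧ (u.1 : ℕ) + 1 = (v.1 : ℕ))

instance (v : Fin N × Fin N) : DecidablePred fun u => below N u v := by
  intro u; unfold below; infer_instance

lemma gkey_lt_of_below {u v : Fin N × Fin N} (h : below N u v) : gkey N u < gkey N v := by
  rcases h with ⟨h1, h2⟩ | ⟨h1, h2⟩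
  · unfold gkey
    rw [h1]
    omega
  · exact gkey_lt_of_fst_lt (by omega)

/-- structural lemma: every grid edge decomposes as s(bot, top) with bot below top. -/
lemma edge_decomp {e : Sym2 (Fin N × Fin N)} (he : e ∈ (gridGraph N).edgeSet) :
    e = s(gbot N e, gtop N e) ∧ below N (gbot N e) (gtop N e) := by
  induction e using Sym2.ind with
  | _ a b =>
    rw [SimpleGraph.mem_edgeSet] at he
    rcases he with ⟨hne, hrel | hrel⟩
    · have hb : below N a b := hrel
      have hlt := gkey_lt_of_below hb
      have ht : gtop N s(a, b) = b := by
        simp only [gtop, Sym2.lift_mk]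
        rw [if_pos hlt.le]
      have hbo : gbot N s(a, b) = a := by
        simp only [gbot, Sym2.lift_mk]
        rw [if_pos hlt.le]
      rw [ht, hbo]
      exact ⟨rfl, hb⟩
    · have hb : below N b a := hrel
      have hlt := gkey_lt_of_below hb
      have ht : gtop N s(a, b) = a := by
        simp only [gtop, Sym2.lift_mk]
        rw [if_neg (not_le.mpr hlt)]
      have hbo : gbot N s(a, b) = b := by
        simp only [gbot, Sym2.lift_mk]
        rw [if_neg (not_le.mpr hlt)]
      rw [ht, hbo]
      exact ⟨Sym2.eq_swap, hb⟩

lemma below_subsingleton (v : Fin N × Fin N) :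
    (univ.filter fun u => below N u v).card ≤ 2 := by
  classical
  have h1 : (univ.filter fun u : Fin N × Fin N =>
      u.1 = v.1 ∧ (u.2 : ℕ) + 1 = (v.2 : ℕ)).card ≤ 1 := by
    apply Finset.card_le_one.mpr
    intro a ha b hb
    simp only [mem_filter] at ha hb
    exact Prod.ext (ha.2.1.trans hb.2.1.symm) (Fin.ext (by omega))
  have h2 : (univ.filter fun u : Fin N × Fin N =>
      u.2 = v.2 ∧ (u.1 : ℕ) + 1 = (v.1 : ℕ)).card ≤ 1 := by
    apply Finset.card_le_one.mpr
    intro a ha b hb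
    simp only [mem_filter] at ha hb
    exact Prod.ext (Fin.ext (by omega)) (ha.2.1.trans hb.2.1.symm)
  have hsub : (univ.filter fun u => below N u v) ⊆
      (univ.filter fun u : Fin N × Fin N => u.1 = v.1 ∧ (u.2 : ℕ) + 1 = (v.2 : ℕ)) ∪
      (univ.filter fun u : Fin N × Fin N => u.2 = v.2 ∧ (u.1 : ℕ) + 1 = (v.1 : ℕ)) := by
    intro u hu
    simp only [mem_filter, mem_union, mem_univ, true_and] at hu ⊢
    exact hu
  calc (univ.filter fun u => below N u v).card ≤ _ := Finset.card_le_card hsub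
    _ ≤ _ := Finset.card_union_le _ _
    _ ≤ 2 := by omega

lemma fiber_card_le (Λ : Finset (Sym2 (Fin N × Fin N)))
    (hΛ : (Λ : Set (Sym2 (Fin N × Fin N))) ⊆ (gridGraph N).edgeSet) (v : Fin N × Fin N) :
    (Λ.filter fun e => gtop N e = v).card ≤ 2 := by
  have : (Λ.filter fun e => gtop N e = v).card ≤
      (univ.filter fun u => below N u v).card := by
    apply Finset.card_le_card_of_injOn (gbot N)
    · intro e he
      simp only [mem_coe, mem_filter] at he
      obtain ⟨hdec, hbel⟩ := edge_decomp (hΛ he.1)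
      simp only [mem_coe, mem_filter, mem_univ, true_and]
      rw [← he.2]
      exact hbel
    · intro e he e' he' hbb
      simp only [coe_filter, Set.mem_setOf_eq] at he he'
      obtain ⟨hdec, _⟩ := edge_decomp (hΛ he.1)
      obtain ⟨hdec', _⟩ := edge_decomp (hΛ he'.1)
      rw [hdec, hdec', hbb, he.2, he'.2]
  exact this.trans (below_subsingleton v)

lemma card_le_two_mul (Λ : Finset (Sym2 (Fin N × Fin N)))
    (hΛ : (Λ : Set (Sym2 (Fin N × Fin N))) ⊆ (gridGraph N).edgeSet) :
    Λ.card ≤ 2 * (Λ.image (gtop N)).card := by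
  classical
  rw [Finset.card_eq_sum_card_fiberwise (f := gtop N) (t := Λ.image (gtop N))
    (fun e he => Finset.mem_image_of_mem _ he)]
  calc ∑ v ∈ Λ.image (gtop N), (Λ.filter fun e => gtop N e = v).card
      ≤ ∑ _v ∈ Λ.image (gtop N), 2 :=
        Finset.sum_le_sum (fun v _ => fiber_card_le Λ hΛ v)
    _ = 2 * (Λ.image (gtop N)).card := by rw [Finset.sum_const, smul_eq_mul, mul_comm]

lemma vanish (Λ : Finset (Sym2 (Fin N × Fin N)))
    (hΛ : (Λ : Set (Sym2 (Fin N × Fin N))) ⊆ (gridGraph N).edgeSet)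
    (x : (Fin N × Fin N) → ℝ) (hx : x ∈ diffNullSpace Λ)
    (h0 : ∀ v, v ∉ Λ.image (gtop N) → x v = 0) : x = 0 := by
  classical
  have H : ∀ k : ℕ, ∀ v, gkey N v = k → x v = 0 := by
    intro k
    induction k using Nat.strong_induction_on with
    | _ k ih =>
      intro v hv
      by_cases hT : v ∈ Λ.image (gtop N)
      · obtain ⟨e, heΛ, het⟩ := Finset.mem_image.mp hT
        obtain ⟨hdec, hbel⟩ := edge_decomp (hΛ heΛ)
        rw [het] at hdec hbel
        have hmem : s(gbot N e, v) ∈ Λ := by rw [← hdec]; exact heΛ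
        have hxy : x (gbot N e) = x v := hx (gbot N e) v hmem
        have hlt : gkey N (gbot N e) < k := hv ▸ gkey_lt_of_below hbel
        rw [← hxy]
        exact ih _ hlt _ rfl
      · exact h0 v hT
  funext v
  exact H (gkey N v) v rfl

end GridAux

/-- for every nonempty set `Λ` of edges of the N×N grid graph,
`dim W_Λ ≤ N² − |Λ|/2` (i.e. `2·dim W_Λ + |Λ| ≤ 2N²`); consequently
`κ(ℓ) ≤ N² − ℓ/2` for every `ℓ ≥ 1`. -/
theorem grid_diffNullSpace_dim_upper_bound (N : ℕ) :
    (∀ Λ : Finset (Sym2 (Fin N × Fin N)),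
      (Λ : Set (Sym2 (Fin N × Fin N))) ⊆ (gridGraph N).edgeSet → Λ.Nonempty →
      2 * Module.finrank ℝ ↥(diffNullSpace Λ) + Λ.card ≤ 2 * N ^ 2)
    ∧
    (∀ ℓ : ℕ, 1 ≤ ℓ → ∀ Λ : Finset (Sym2 (Fin N × Fin N)),
      (Λ : Set (Sym2 (Fin N × Fin N))) ⊆ (gridGraph N).edgeSet → ℓ ≤ Λ.card →
      2 * Module.finrank ℝ ↥(diffNullSpace Λ) + ℓ ≤ 2 * N ^ 2) := by
  classical
  have main : ∀ Λ : Finset (Sym2 (Fin N × Fin N)),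
      (Λ : Set (Sym2 (Fin N × Fin N))) ⊆ (gridGraph N).edgeSet →
      2 * Module.finrank ℝ ↥(diffNullSpace Λ) + Λ.card ≤ 2 * N ^ 2 := by
    intro Λ hΛ
    set T := Λ.image (GridAux.gtop N) with hT
    -- linear restriction map
    let L : ↥(diffNullSpace Λ) →ₗ[ℝ] ({v : Fin N × Fin N // v ∉ T} → ℝ) :=
      { toFun := fun x v => x.1 v.1
        map_add' := fun x y => rfl
        map_smul' := fun c x => rfl }
    have hinj : Function.Injective L := by
      rw [injective_iff_map_eq_zero]
      intro x hx0
      have : (x : (Fin N × Fin N) → ℝ) = 0 := by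
        apply GridAux.vanish Λ hΛ _ x.2
        intro v hv
        exact congrFun hx0 ⟨v, hv⟩
      exact Subtype.ext this
    have hdim : Module.finrank ℝ ↥(diffNullSpace Λ) ≤
        Fintype.card {v : Fin N × Fin N // v ∉ T} := by
      have := LinearMap.finrank_le_finrank_of_injective hinj
      rwa [Module.finrank_fintype_fun_eq_card] at this
    have hcardsub : Fintype.card {v : Fin N × Fin N // v ∉ T} = N ^ 2 - T.card := by
      rw [Fintype.card_subtype_compl]
      congr 1
      · rw [Fintype.card_prod, Fintype.card_fin, sq]
      · exact Fintype.card_coe T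
    have hTle : T.card ≤ N ^ 2 := by
      have := Finset.card_le_univ T
      simpa [Fintype.card_prod, sq] using this
    have hΛc := GridAux.card_le_two_mul Λ hΛ
    rw [← hT] at hΛc
    rw [hcardsub] at hdim
    omega
  constructor
  · exact fun Λ hΛ _ => main Λ hΛ
  · intro ℓ hℓ Λ hΛ hcard
    have := main Λ hΛ
    omega
end

section
/- Consider the N×N grid graph with vertex set V = {1,…,N}² and edge set E of horizontally and vertically adjacent pairs. For every integer ℓ with 5 ≤ ℓ and √(ℓ/2) + 2 ≤ N, there exists Λ ⊆ E with |Λ| = ℓ such that the subspace W_Λ = {x ∈ ℝ^V : x(u) = x(v) for every {u,v} ∈ Λ} satisfies dim W_Λ ≥ N² − ℓ/2 − √(ℓ/2) − 1. Consequently, κ(ℓ) := max_{|Λ| ≥ ℓ} dim W_Λ ≥ N² − ℓ/2 − √(ℓ/2) − 1. -/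
open Finset

lemma finrank_diffNullSpace_ge {V : Type*} [Fintype V] [DecidableEq V]
    (Λ : Finset (Sym2 V)) (S : Finset V) (hS : S.Nonempty)
    (hcov : ∀ u v : V, s(u,v) ∈ Λ → u ∈ S ∧ v ∈ S) :
    Fintype.card V + 1 - S.card ≤ Module.finrank ℝ ↥(diffNullSpace Λ) := by
  classical
  let φ : (({v : V // v ∉ S} → ℝ) × ℝ) →ₗ[ℝ] (V → ℝ) :=
    { toFun := fun p v => if h : v ∈ S then p.2 else p.1 ⟨v, h⟩
      map_add' := by intro p q; funext v; by_cases h : v ∈ S <;> simp [h]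
      map_smul' := by intro c p; funext v; by_cases h : v ∈ S <;> simp [h] }
  have hφ : ∀ p v, φ p v = if h : v ∈ S then p.2 else p.1 ⟨v, h⟩ := fun _ _ => rfl
  have hrange : LinearMap.range φ ≤ diffNullSpace Λ := by
    rintro x ⟨p, rfl⟩
    intro u v huv
    obtain ⟨hu, hv⟩ := hcov u v huv
    rw [hφ, hφ, dif_pos hu, dif_pos hv]
  have hinj : Function.Injective φ := by
    intro p q h
    obtain ⟨s₀, hs₀⟩ := hS
    have h2 : p.2 = q.2 := by
      have := congrFun h s₀
      rwa [hφ, hφ, dif_pos hs₀, dif_pos hs₀] at this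
    have h1 : p.1 = q.1 := by
      funext v
      have := congrFun h v.1
      rwa [hφ, hφ, dif_neg v.2, dif_neg v.2] at this
    exact Prod.ext h1 h2
  have hr : Module.finrank ℝ ↥(LinearMap.range φ) = (Fintype.card V - S.card) + 1 := by
    rw [LinearMap.finrank_range_of_inj hinj, Module.finrank_prod,
      Module.finrank_fintype_fun_eq_card, Module.finrank_self,
      Fintype.card_subtype_compl]
    simp [Fintype.card_coe]
  have hle := Submodule.finrank_mono (R := ℝ) hrange
  have hcard := S.card_le_univ
  omega


section Constr
variable (N k a j : ℕ)

lemma constr (ℓ : ℕ) (ha1 : 1 ≤ a) (hak : a ≤ k) (hk2 : 2 ≤ k)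
    (hkN : k + 1 ≤ N) (hj1 : 1 ≤ j) (hjk : j ≤ k)
    (hℓ : ℓ + 1 ≤ a*(k-1) + (a-1)*k + 2*j) :
    ∃ Λ : Finset (Sym2 (Fin N × Fin N)),
      (Λ : Set (Sym2 (Fin N × Fin N))) ⊆ (gridGraph N).edgeSet ∧ Λ.card = ℓ ∧
      (∃ S : Finset (Fin N × Fin N), S.Nonempty ∧ S.card = a*k + j ∧
        ∀ u v, s(u,v) ∈ Λ → u ∈ S ∧ v ∈ S) := by
  have hN : 0 < N := by omega
  set f : ℕ × ℕ → Fin N × Fin N :=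
    fun p => (⟨p.1 % N, Nat.mod_lt _ hN⟩, ⟨p.2 % N, Nat.mod_lt _ hN⟩) with hf
  have fval1 : ∀ p : ℕ × ℕ, p.1 < N → ((f p).1 : ℕ) = p.1 := by
    intro p hp; simp [hf, Nat.mod_eq_of_lt hp]
  have fval2 : ∀ p : ℕ × ℕ, p.2 < N → ((f p).2 : ℕ) = p.2 := by
    intro p hp; simp [hf, Nat.mod_eq_of_lt hp]
  have feq : ∀ p q : ℕ × ℕ, p.1 < N → p.2 < N → q.1 < N → q.2 < N →
      f p = f q → p = q := by
    intro p q h1 h2 h3 h4 h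
    have e1 : ((f p).1 : ℕ) = ((f q).1 : ℕ) := by rw [h]
    have e2 : ((f p).2 : ℕ) = ((f q).2 : ℕ) := by rw [h]
    rw [fval1 p h1, fval1 q h3] at e1
    rw [fval2 p h2, fval2 q h4] at e2
    exact Prod.ext e1 e2
  set S₀ : Finset (ℕ × ℕ) := (range a ×ˢ range k) ∪ ({a} ×ˢ range j) with hS₀
  set S : Finset (Fin N × Fin N) := S₀.image f with hS
  -- coordinates of S₀ are small
  have hS₀small : ∀ p ∈ S₀, p.1 < N ∧ p.2 < N := by
    intro p hp
    simp only [hS₀, mem_union, mem_product, mem_range, mem_singleton] at hp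
    rcases hp with ⟨h1, h2⟩ | ⟨h1, h2⟩ <;> omega
  have hScard : S.card = a*k + j := by
    rw [hS, Finset.card_image_of_injOn]
    · rw [hS₀, Finset.card_union_of_disjoint]
      · simp [Finset.card_product]
      · rw [Finset.disjoint_left]
        intro p hp hp'
        simp only [mem_product, mem_range, mem_singleton] at hp hp'
        omega
    · intro p hp q hq h
      exact feq p q (hS₀small p hp).1 (hS₀small p hp).2 (hS₀small q hq).1 (hS₀small q hq).2 h
  -- index sets and edge maps
  set I₁ : Finset (ℕ × ℕ) := (range a ×ˢ range (k-1)) ∪ ({a} ×ˢ range (j-1)) with hI₁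
  set I₂ : Finset (ℕ × ℕ) := (range (a-1) ×ˢ range k) ∪ ({a-1} ×ˢ range j) with hI₂
  set vert : ℕ × ℕ → Sym2 (Fin N × Fin N) := fun p => s(f p, f (p.1, p.2+1)) with hvert
  set hor : ℕ × ℕ → Sym2 (Fin N × Fin N) := fun p => s(f p, f (p.1+1, p.2)) with hhor
  have hI₁small : ∀ p ∈ I₁, p.1 < N ∧ p.2 + 1 < N ∧ p.1 ≤ a ∧ p.2 + 1 < k := by
    intro p hp
    simp only [hI₁, mem_union, mem_product, mem_range, mem_singleton] at hp
    rcases hp with ⟨h1, h2⟩ | ⟨h1, h2⟩ <;> omega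
  have hI₂small : ∀ p ∈ I₂, p.1 + 1 < N ∧ p.2 < N ∧ p.1 + 1 ≤ a ∧ p.2 < k := by
    intro p hp
    simp only [hI₂, mem_union, mem_product, mem_range, mem_singleton] at hp
    rcases hp with ⟨h1, h2⟩ | ⟨h1, h2⟩ <;> omega
  set Λ₁ : Finset (Sym2 (Fin N × Fin N)) := I₁.image vert ∪ I₂.image hor with hΛ₁
  -- card of Λ₁
  have hinj1 : Set.InjOn vert I₁ := by
    intro p hp q hq h
    obtain ⟨hp1, hp2, -, -⟩ := hI₁small p hp
    obtain ⟨hq1, hq2, -, -⟩ := hI₁small q hq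
    rw [hvert] at h
    simp only [Sym2.eq_iff] at h
    rcases h with ⟨h1, -⟩ | ⟨h1, h2⟩
    · exact feq p q hp1 (by omega) hq1 (by omega) h1
    · exfalso
      have e1 := feq p (q.1, q.2+1) hp1 (by omega) hq1 hq2 h1
      have e2 := feq (p.1, p.2+1) q hp1 hp2 hq1 (by omega) h2
      have a1 := congrArg Prod.snd e1
      have a2 := congrArg Prod.snd e2
      simp only at a1 a2
      omega
  have hinj2 : Set.InjOn hor I₂ := by
    intro p hp q hq h
    obtain ⟨hp1, hp2, -, -⟩ := hI₂small p hp
    obtain ⟨hq1, hq2, -, -⟩ := hI₂small q hq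
    rw [hhor] at h
    simp only [Sym2.eq_iff] at h
    rcases h with ⟨h1, -⟩ | ⟨h1, h2⟩
    · exact feq p q (by omega) hp2 (by omega) hq2 h1
    · exfalso
      have e1 := feq p (q.1+1, q.2) (by omega) hp2 hq1 hq2 h1
      have e2 := feq (p.1+1, p.2) q hp1 hp2 (by omega) hq2 h2
      have a1 := congrArg Prod.fst e1
      have a2 := congrArg Prod.fst e2
      simp only at a1 a2
      omega
  have hdisj : Disjoint (I₁.image vert) (I₂.image hor) := by
    rw [Finset.disjoint_left]
    intro e he1 he2
    simp only [Finset.mem_image] at he1 he2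
    obtain ⟨p, hp, hpe⟩ := he1
    obtain ⟨q, hq, hqe⟩ := he2
    obtain ⟨hp1, hp2, -, -⟩ := hI₁small p hp
    obtain ⟨hq1, hq2, -, -⟩ := hI₂small q hq
    have h : vert p = hor q := by rw [hpe, hqe]
    rw [hvert, hhor] at h
    simp only [Sym2.eq_iff] at h
    rcases h with ⟨h1, h2⟩ | ⟨h1, h2⟩
    · have e1 := feq p q (by omega) (by omega) (by omega) hq2 h1
      have e2 := feq (p.1, p.2+1) (q.1+1, q.2) (by omega) hp2 hq1 hq2 h2
      have a1 := congrArg Prod.snd e1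
      have a2 := congrArg Prod.snd e2
      simp only at a1 a2
      omega
    · have e1 := feq p (q.1+1, q.2) (by omega) (by omega) hq1 hq2 h1
      have e2 := feq (p.1, p.2+1) q (by omega) hp2 (by omega) hq2 h2
      have a1 := congrArg Prod.fst e1
      have a2 := congrArg Prod.fst e2
      simp only at a1 a2
      omega
  have hΛ₁card : Λ₁.card = a*(k-1) + (j-1) + ((a-1)*k + j) := by
    rw [hΛ₁, Finset.card_union_of_disjoint hdisj,
      Finset.card_image_of_injOn hinj1, Finset.card_image_of_injOn hinj2,
      hI₁, hI₂, Finset.card_union_of_disjoint, Finset.card_union_of_disjoint]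
    · simp [Finset.card_product]
    · rw [Finset.disjoint_left]
      intro p hp hp'
      simp only [mem_product, mem_range, mem_singleton] at hp hp'
      omega
    · rw [Finset.disjoint_left]
      intro p hp hp'
      simp only [mem_product, mem_range, mem_singleton] at hp hp'
      omega
  -- Λ₁ edges are grid edges
  have hedge : (Λ₁ : Set (Sym2 (Fin N × Fin N))) ⊆ (gridGraph N).edgeSet := by
    intro e he
    simp only [hΛ₁, Finset.coe_union, Set.mem_union, Finset.coe_image, Set.mem_image,
      Finset.mem_coe] at he
    rcases he with ⟨p, hp, rfl⟩ | ⟨p, hp, rfl⟩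
    · obtain ⟨hp1, hp2, -, -⟩ := hI₁small p hp
      rw [hvert, SimpleGraph.mem_edgeSet, gridGraph, SimpleGraph.fromRel_adj]
      constructor
      · intro h
        have hh : ((f p).2 : ℕ) = ((f (p.1, p.2+1)).2 : ℕ) :=
          congrArg (fun x => ((x.2 : Fin N) : ℕ)) h
        rw [fval2 p (by omega), fval2 (p.1, p.2+1) hp2] at hh
        omega
      · left; left
        refine ⟨rfl, ?_⟩
        rw [fval2 p (by omega), fval2 (p.1, p.2+1) hp2]
    · obtain ⟨hp1, hp2, -, -⟩ := hI₂small p hp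
      rw [hhor, SimpleGraph.mem_edgeSet, gridGraph, SimpleGraph.fromRel_adj]
      constructor
      · intro h
        have hh : ((f p).1 : ℕ) = ((f (p.1+1, p.2)).1 : ℕ) :=
          congrArg (fun x => ((x.1 : Fin N) : ℕ)) h
        rw [fval1 p (by omega), fval1 (p.1+1, p.2) hp1] at hh
        omega
      · left; right
        refine ⟨rfl, ?_⟩
        rw [fval1 p (by omega), fval1 (p.1+1, p.2) hp1]
  -- endpoints in S
  have hend : ∀ u v : Fin N × Fin N, s(u,v) ∈ Λ₁ → u ∈ S ∧ v ∈ S := by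
    have hmem : ∀ p ∈ S₀, f p ∈ S := by
      intro p hp; exact Finset.mem_image_of_mem f hp
    have key : ∀ e ∈ Λ₁, ∀ w : Fin N × Fin N, w ∈ e → w ∈ S := by
      intro e he w hw
      simp only [hΛ₁, Finset.mem_union, Finset.mem_image] at he
      rcases he with ⟨p, hp, rfl⟩ | ⟨p, hp, rfl⟩
      · rw [hvert, Sym2.mem_iff] at hw
        simp only [hI₁, mem_union, mem_product, mem_range, mem_singleton] at hp
        rcases hw with rfl | rfl
        · apply hmem
          simp only [hS₀, mem_union, mem_product, mem_range, mem_singleton]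
          rcases hp with ⟨h1, h2⟩ | ⟨h1, h2⟩
          · left; exact ⟨h1, by omega⟩
          · right; exact ⟨h1, by omega⟩
        · apply hmem
          simp only [hS₀, mem_union, mem_product, mem_range, mem_singleton]
          rcases hp with ⟨h1, h2⟩ | ⟨h1, h2⟩
          · left; exact ⟨h1, by omega⟩
          · right; exact ⟨h1, by omega⟩
      · rw [hhor, Sym2.mem_iff] at hw
        simp only [hI₂, mem_union, mem_product, mem_range, mem_singleton] at hp
        rcases hw with rfl | rfl
        · apply hmem
          simp only [hS₀, mem_union, mem_product, mem_range, mem_singleton]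
          rcases hp with ⟨h1, h2⟩ | ⟨h1, h2⟩
          · left; exact ⟨by omega, h2⟩
          · left; constructor <;> omega
        · apply hmem
          simp only [hS₀, mem_union, mem_product, mem_range, mem_singleton]
          rcases hp with ⟨h1, h2⟩ | ⟨h1, h2⟩
          · left; exact ⟨by omega, by omega⟩
          · right; exact ⟨by omega, by omega⟩
    intro u v he
    exact ⟨key _ he u (by simp), key _ he v (by simp)⟩
  -- choose Λ
  obtain ⟨Λ, hΛsub, hΛcard⟩ := Finset.exists_subset_card_eq
    (s := Λ₁) (n := ℓ) (by rw [hΛ₁card]; omega)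
  refine ⟨Λ, ?_, hΛcard, S, ?_, hScard, ?_⟩
  · exact fun e he => hedge (hΛsub he)
  · refine ⟨f (0,0), Finset.mem_image_of_mem f ?_⟩
    simp only [hS₀, mem_union, mem_product, mem_range, mem_singleton]
    left; omega
  · exact fun u v h => hend u v (hΛsub h)

end Constr

set_option maxHeartbeats 2000000 in
/-- for every integer `ℓ` with `5 ≤ ℓ` and `√(ℓ/2) + 2 ≤ N`, there is a
set `Λ` of `ℓ` edges of the N×N grid graph with
`dim W_Λ ≥ N² − ℓ/2 − √(ℓ/2) − 1`; consequently `κ(ℓ)` satisfies the same lower bound. -/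
theorem grid_diffNullSpace_dim_lower_bound
    (N ℓ : ℕ) (h5 : 5 ≤ ℓ) (hN : Real.sqrt ((ℓ : ℝ) / 2) + 2 ≤ (N : ℝ)) :
    ∃ Λ : Finset (Sym2 (Fin N × Fin N)),
      (Λ : Set (Sym2 (Fin N × Fin N))) ⊆ (gridGraph N).edgeSet ∧ Λ.card = ℓ ∧
      (N : ℝ) ^ 2 - (ℓ : ℝ) / 2 - Real.sqrt ((ℓ : ℝ) / 2) - 1 ≤
        (Module.finrank ℝ ↥(diffNullSpace Λ) : ℝ) := by

  have hK1 : 1 ≤ Nat.sqrt (ℓ/2) := Nat.le_sqrt.2 (by omega)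
  obtain ⟨K', hK'⟩ : ∃ K', Nat.sqrt (ℓ/2) = K' + 1 := ⟨Nat.sqrt (ℓ/2) - 1, by omega⟩
  have hKsq : (K'+1) * (K'+1) ≤ ℓ/2 := hK' ▸ Nat.sqrt_le (ℓ/2)
  have hub : ℓ/2 < (K'+2) * (K'+2) := by
    have h := Nat.lt_succ_sqrt (ℓ/2); rw [hK'] at h; exact h
  have hKs : ((K':ℝ) + 1) ≤ Real.sqrt ((ℓ:ℝ)/2) := by
    rw [Real.le_sqrt (by positivity) (by positivity)]
    have h1 : (((K'+1)*(K'+1) : ℕ) : ℝ) ≤ ((ℓ/2 : ℕ) : ℝ) := Nat.cast_le.2 hKsq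
    have h2 : ((ℓ/2 : ℕ) : ℝ) ≤ (ℓ:ℝ)/2 := Nat.cast_div_le
    push_cast at h1
    nlinarith
  have hkN : K' + 2 + 1 ≤ N := by
    have h : ((K'+2:ℕ):ℝ) + 1 ≤ (N:ℝ) := by push_cast; linarith
    exact_mod_cast h
  have hq := Nat.div_add_mod ℓ 2
  have hq2 : ℓ % 2 < 2 := Nat.mod_lt _ (by norm_num)
  have e1 : (K'+1)*(K'+1) = K'*K' + 2*K' + 1 := by ring
  have e2 : (K'+2)*(K'+2) = K'*K' + 4*K' + 4 := by ring
  have e3 : 2*(K'+2)*(K'+1) = 2*(K'*K') + 6*K' + 4 := by ring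
  have hs1 : (K'+2) - 1 = K'+1 := rfl
  have hs2 : (K'+1) - 1 = K' := rfl
  by_cases hcase : ℓ ≤ 2*(K'+2)*(K'+1)
  · -- a = K'+1, k = K'+2
    have hbase : (K'+1)*((K'+2)-1) + ((K'+1)-1)*(K'+2) = 2*(K'*K') + 4*K' + 1 := by
      rw [hs1, hs2]; ring
    have hbl : 2*(K'*K') + 4*K' + 1 < ℓ := by omega
    have hd := Nat.div_add_mod (ℓ - (2*(K'*K') + 4*K' + 1)) 2
    have hd2 : (ℓ - (2*(K'*K') + 4*K' + 1)) % 2 < 2 := Nat.mod_lt _ (by norm_num)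
    have hjk : (ℓ - (2*(K'*K') + 4*K' + 1))/2 + 1 ≤ K' + 2 := by omega
    have hℓ' : ℓ + 1 ≤ (K'+1)*((K'+2)-1) + ((K'+1)-1)*(K'+2)
        + 2*((ℓ - (2*(K'*K') + 4*K' + 1))/2 + 1) := by rw [hbase]; omega
    have hvk : (K'+1) * (K'+2) = K'*K' + 3*K' + 2 := by ring
    have h2v : 2*((K'+1)*(K'+2) + ((ℓ - (2*(K'*K') + 4*K' + 1))/2 + 1))
        ≤ ℓ + 2*(K'+2) + 2 := by rw [hvk]; omega
    obtain ⟨Λ, hedge, hΛc, S, hSne, hScard, hSend⟩ :=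
      constr N (K'+2) (K'+1) ((ℓ - (2*(K'*K') + 4*K' + 1))/2 + 1) ℓ
        (by omega) (by omega) (by omega) hkN (by omega) hjk hℓ'
    have h3 : (((K'+1)*(K'+2) + ((ℓ - (2*(K'*K') + 4*K' + 1))/2 + 1) : ℕ) : ℝ)
        ≤ (ℓ:ℝ)/2 + Real.sqrt ((ℓ:ℝ)/2) + 2 := by
      have hc : ((2*((K'+1)*(K'+2) + ((ℓ - (2*(K'*K') + 4*K' + 1))/2 + 1)) : ℕ) : ℝ)
          ≤ ((ℓ + 2*(K'+2) + 2 : ℕ) : ℝ) := Nat.cast_le.2 h2v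
      push_cast at hc ⊢
      nlinarith [hc, hKs]
    refine ⟨Λ, hedge, hΛc, ?_⟩
    have hfr := finrank_diffNullSpace_ge Λ S hSne hSend
    have hcV : Fintype.card (Fin N × Fin N) = N^2 := by
      simp [pow_two]
    rw [hcV, hScard] at hfr
    have hm : ((K'+1)*(K'+2) + ((ℓ - (2*(K'*K') + 4*K' + 1))/2 + 1) : ℕ) ≤ N^2 := by
      have hmul : (K'+2)*(K'+3) ≤ N*N := Nat.mul_le_mul (by omega) (by omega)
      have hpw : N^2 = N*N := sq N
      have hmul2 : (K'+1)*(K'+2) ≤ (K'+2)*(K'+2) := Nat.mul_le_mul (by omega) (by omega)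
      have e4 : (K'+2)*(K'+3) = (K'+2)*(K'+2) + (K'+2) := by ring
      omega
    have h4 : ((N^2 + 1 - ((K'+1)*(K'+2) + ((ℓ - (2*(K'*K') + 4*K' + 1))/2 + 1)) : ℕ) : ℝ)
        = (N:ℝ)^2 + 1 - (((K'+1)*(K'+2) + ((ℓ - (2*(K'*K') + 4*K' + 1))/2 + 1) : ℕ) : ℝ) := by
      rw [Nat.cast_sub (by omega)]
      push_cast
      ring
    have h6 : ((N^2 + 1 - ((K'+1)*(K'+2) + ((ℓ - (2*(K'*K') + 4*K' + 1))/2 + 1)) : ℕ) : ℝ)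
        ≤ (Module.finrank ℝ ↥(diffNullSpace Λ) : ℝ) := Nat.cast_le.2 hfr
    linarith [h3, h4 ▸ h6]
  · -- a = K'+2, k = K'+2
    have hbase : (K'+2)*((K'+2)-1) + ((K'+2)-1)*(K'+2) = 2*(K'*K') + 6*K' + 4 := by
      rw [hs1]; ring
    have hbl : 2*(K'*K') + 6*K' + 4 < ℓ := by omega
    have hd := Nat.div_add_mod (ℓ - (2*(K'*K') + 6*K' + 4)) 2
    have hd2 : (ℓ - (2*(K'*K') + 6*K' + 4)) % 2 < 2 := Nat.mod_lt _ (by norm_num)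
    have hjk : (ℓ - (2*(K'*K') + 6*K' + 4))/2 + 1 ≤ K' + 2 := by omega
    have hℓ' : ℓ + 1 ≤ (K'+2)*((K'+2)-1) + ((K'+2)-1)*(K'+2)
        + 2*((ℓ - (2*(K'*K') + 6*K' + 4))/2 + 1) := by rw [hbase]; omega
    have h2v : 2*((K'+2)*(K'+2) + ((ℓ - (2*(K'*K') + 6*K' + 4))/2 + 1))
        ≤ ℓ + 2*(K'+2) + 2 := by omega
    obtain ⟨Λ, hedge, hΛc, S, hSne, hScard, hSend⟩ :=
      constr N (K'+2) (K'+2) ((ℓ - (2*(K'*K') + 6*K' + 4))/2 + 1) ℓ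
        (by omega) (by omega) (by omega) hkN (by omega) hjk hℓ'
    have h3 : (((K'+2)*(K'+2) + ((ℓ - (2*(K'*K') + 6*K' + 4))/2 + 1) : ℕ) : ℝ)
        ≤ (ℓ:ℝ)/2 + Real.sqrt ((ℓ:ℝ)/2) + 2 := by
      have hc : ((2*((K'+2)*(K'+2) + ((ℓ - (2*(K'*K') + 6*K' + 4))/2 + 1)) : ℕ) : ℝ)
          ≤ ((ℓ + 2*(K'+2) + 2 : ℕ) : ℝ) := Nat.cast_le.2 h2v
      push_cast at hc ⊢
      nlinarith [hc, hKs]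
    refine ⟨Λ, hedge, hΛc, ?_⟩
    have hfr := finrank_diffNullSpace_ge Λ S hSne hSend
    have hcV : Fintype.card (Fin N × Fin N) = N^2 := by
      simp [pow_two]
    rw [hcV, hScard] at hfr
    have hm : ((K'+2)*(K'+2) + ((ℓ - (2*(K'*K') + 6*K' + 4))/2 + 1) : ℕ) ≤ N^2 := by
      have hmul : (K'+2)*(K'+3) ≤ N*N := Nat.mul_le_mul (by omega) (by omega)
      have hpw : N^2 = N*N := sq N
      have hmul2 : (K'+2)*(K'+2) ≤ (K'+2)*(K'+2) := Nat.mul_le_mul (by omega) (by omega)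
      have e4 : (K'+2)*(K'+3) = (K'+2)*(K'+2) + (K'+2) := by ring
      omega
    have h4 : ((N^2 + 1 - ((K'+2)*(K'+2) + ((ℓ - (2*(K'*K') + 6*K' + 4))/2 + 1)) : ℕ) : ℝ)
        = (N:ℝ)^2 + 1 - (((K'+2)*(K'+2) + ((ℓ - (2*(K'*K') + 6*K' + 4))/2 + 1) : ℕ) : ℝ) := by
      rw [Nat.cast_sub (by omega)]
      push_cast
      ring
    have h6 : ((N^2 + 1 - ((K'+2)*(K'+2) + ((ℓ - (2*(K'*K') + 6*K' + 4))/2 + 1)) : ℕ) : ℝ)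
        ≤ (Module.finrank ℝ ↥(diffNullSpace Λ) : ℝ) := Nat.cast_le.2 hfr
    linarith [h3, h4 ▸ h6]
end

section
/- Consider the N×N grid graph with vertex set V = {1,…,N}² and edge set E of horizontally and vertically adjacent pairs. For every integer ℓ with 1 ≤ ℓ ≤ |E|, the minimum of |V(Λ)| − J(Λ) over all Λ ⊆ E with |Λ| ≥ ℓ is attained at some Λ with |Λ| = ℓ whose subgraph (V(Λ), Λ) is connected, i.e., J(Λ) = 1. Here V(Λ) is the set of vertices incident to at least one edge of Λ and J(Λ) is the number of connected components of the subgraph (V(Λ), Λ). -/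
open Finset

/-- `V(Λ)`: the set of vertices incident to at least one edge of `Λ`. -/
def coveredVerts {V : Type*} [Fintype V] [DecidableEq V] (Λ : Finset (Sym2 V)) :
    Finset V :=
  Finset.univ.filter fun v => ∃ e ∈ Λ, v ∈ e

/-- `J(Λ)`: the number of connected components of the subgraph `(V(Λ), Λ)`, i.e. the
number of connected components of the graph on `V` with edge set `Λ` that meet `V(Λ)`. -/
noncomputable def numComponents {V : Type*} [Fintype V] [DecidableEq V]
    (Λ : Finset (Sym2 V)) : ℕ :=
  Nat.card {c : (SimpleGraph.fromEdgeSet (Λ : Set (Sym2 V))).ConnectedComponent //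
    ∃ v ∈ coveredVerts Λ,
      (SimpleGraph.fromEdgeSet (Λ : Set (Sym2 V))).connectedComponentMk v = c}

namespace GridThm


private lemma tt_ex (n : ℕ) : ∃ t, 4*n ≤ t*t :=
  ⟨2*n, by cases n with | zero => simp | succ m => nlinarith⟩

/-- least `t` with `t^2 ≥ 4n`, i.e. `⌈2√n⌉`. -/
def tt (n : ℕ) : ℕ := Nat.find (tt_ex n)

lemma tt_spec (n : ℕ) : 4*n ≤ tt n * tt n := Nat.find_spec (tt_ex n)

lemma tt_min {n s : ℕ} (h : 4*n ≤ s*s) : tt n ≤ s := Nat.find_min' (tt_ex n) h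

lemma tt_le2n (n : ℕ) : tt n ≤ 2*n := by
  cases n with
  | zero => exact tt_min (by simp)
  | succ m => exact tt_min (by nlinarith)

lemma tt_ge2 {n : ℕ} (h : 1 ≤ n) : 2 ≤ tt n := by
  by_contra hc
  push_neg at hc
  have h1 := tt_spec n
  have h2 : tt n * tt n ≤ 1 := by
    have : tt n ≤ 1 := by omega
    nlinarith
  omega

lemma tt_mono {a b : ℕ} (h : a ≤ b) : tt a ≤ tt b :=
  tt_min (le_trans (by omega) (tt_spec b))

/-- `W(n) = 2n − ⌈2√n⌉` : the max number of grid edges on `n` vertices. -/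
def WW (n : ℕ) : ℕ := 2*n - tt n

lemma WW_super {a b : ℕ} (ha : 1 ≤ a) (hb : 1 ≤ b) : WW a + WW b ≤ WW (a + b - 1) := by
  have h2a := tt_ge2 ha; have h2b := tt_ge2 hb
  have hs : 4*(a+b-1) ≤ (tt a + tt b - 2) * (tt a + tt b - 2) := by
    have sa := tt_spec a; have sb := tt_spec b
    obtain ⟨s, hsa⟩ : ∃ s, tt a = s + 2 := ⟨tt a - 2, by omega⟩
    obtain ⟨u, hub⟩ : ∃ u, tt b = u + 2 := ⟨tt b - 2, by omega⟩
    obtain ⟨c, hc⟩ : ∃ c, a + b = c + 1 := ⟨a + b - 1, by omega⟩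
    rw [hsa] at sa; rw [hub] at sb
    have : a + b - 1 = c := by omega
    rw [this, hsa, hub]
    have : s + 2 + (u + 2) - 2 = s + u + 2 := by omega
    rw [this]
    nlinarith [Nat.zero_le (s*u)]
  have hmin := tt_min hs
  have la := tt_le2n a; have lb := tt_le2n b
  have lab := tt_le2n (a+b-1)
  unfold WW
  omega

lemma WW_fold {ι : Type*} (s : Finset ι) (g : ι → ℕ) (hne : s.Nonempty)
    (hg : ∀ i ∈ s, 1 ≤ g i) :
    ∑ i ∈ s, WW (g i) ≤ WW (∑ i ∈ s, (g i - 1) + 1) := by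
  induction hne using Finset.Nonempty.cons_induction with
  | singleton i =>
      simp only [Finset.sum_singleton]
      have : g i - 1 + 1 = g i := by have := hg i (by simp); omega
      rw [this]
  | cons i s hi hs ih =>
      rw [Finset.sum_cons, Finset.sum_cons]
      have hgi : 1 ≤ g i := hg i (by simp)
      have hrest : ∀ j ∈ s, 1 ≤ g j := fun j hj => hg j (Finset.mem_cons_of_mem hj)
      calc WW (g i) + ∑ j ∈ s, WW (g j)
          ≤ WW (g i) + WW (∑ j ∈ s, (g j - 1) + 1) := by
            exact Nat.add_le_add_left (ih hrest) _
        _ ≤ WW (g i + (∑ j ∈ s, (g j - 1) + 1) - 1) := WW_super hgi (by omega)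
        _ = WW (g i - 1 + ∑ j ∈ s, (g j - 1) + 1) := by
            congr 1; omega

lemma tt_sq {k : ℕ} (hk : 1 ≤ k) : tt (k*k) = 2*k := by
  refine le_antisymm (tt_min (by nlinarith)) ?_
  by_contra hc
  push_neg at hc
  have h1 := tt_spec (k*k)
  have : tt (k*k) ≤ 2*k - 1 := by omega
  nlinarith

lemma tt_sq1 {k : ℕ} (hk : 1 ≤ k) : tt (k*k+1) = 2*k+1 := by
  refine le_antisymm (tt_min (by nlinarith)) ?_
  by_contra hc
  push_neg at hc
  have h1 := tt_spec (k*k+1)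
  have : tt (k*k+1) ≤ 2*k := by omega
  nlinarith

lemma tt_sqk {k : ℕ} (hk : 1 ≤ k) : tt (k*k+k) = 2*k+1 := by
  refine le_antisymm (tt_min (by nlinarith)) ?_
  by_contra hc
  push_neg at hc
  have h1 := tt_spec (k*k+k)
  have : tt (k*k+k) ≤ 2*k := by omega
  nlinarith

lemma tt_sqk1 {k : ℕ} (hk : 1 ≤ k) : tt (k*k+k+1) = 2*k+2 := by
  refine le_antisymm (tt_min (by nlinarith)) ?_
  by_contra hc
  push_neg at hc
  have h1 := tt_spec (k*k+k+1)
  have : tt (k*k+k+1) ≤ 2*k+1 := by omega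
  nlinarith


/-- the "one step right or up" relation used by `gridGraph` -/
def relG {N : ℕ} (u v : Fin N × Fin N) : Prop :=
  (u.1 = v.1 ∧ (u.2 : ℕ) + 1 = (v.2 : ℕ)) ∨ (u.2 = v.2 ∧ (u.1 : ℕ) + 1 = (v.1 : ℕ))

lemma relG_ne {N : ℕ} {u v : Fin N × Fin N} (h : relG u v) : u ≠ v := by
  rintro rfl
  rcases h with ⟨-, h⟩ | ⟨-, h⟩ <;> omega

lemma grid_adj {N : ℕ} {u v : Fin N × Fin N} :
    (gridGraph N).Adj u v ↔ relG u v ∨ relG v u := by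
  unfold gridGraph
  rw [SimpleGraph.fromRel_adj]
  constructor
  · rintro ⟨-, h⟩; exact h
  · intro h
    refine ⟨?_, h⟩
    rcases h with h | h
    · exact relG_ne h
    · exact (relG_ne h).symm

lemma mem_grid_edgeSet {N : ℕ} {a b : Fin N × Fin N} :
    s(a, b) ∈ (gridGraph N).edgeSet ↔ relG a b ∨ relG b a := by
  rw [SimpleGraph.mem_edgeSet, grid_adj]

/-- e is a horizontal edge (second coordinates equal). -/
def isH {N : ℕ} (e : Sym2 (Fin N × Fin N)) : Prop :=
  ∃ a b : Fin N × Fin N, e = s(a, b) ∧ a.2 = b.2 ∧ (a.1 : ℕ) + 1 = (b.1 : ℕ)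

/-- e is a vertical edge (first coordinates equal). -/
def isV {N : ℕ} (e : Sym2 (Fin N × Fin N)) : Prop :=
  ∃ a b : Fin N × Fin N, e = s(a, b) ∧ a.1 = b.1 ∧ (a.2 : ℕ) + 1 = (b.2 : ℕ)

lemma isH_or_isV {N : ℕ} {e : Sym2 (Fin N × Fin N)}
    (he : e ∈ (gridGraph N).edgeSet) : isH e ∨ isV e := by
  induction e with
  | _ a b =>
    rw [mem_grid_edgeSet] at he
    rcases he with (⟨h1, h2⟩|⟨h1, h2⟩) | (⟨h1, h2⟩|⟨h1, h2⟩)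
    · exact Or.inr ⟨a, b, rfl, h1, h2⟩
    · exact Or.inl ⟨a, b, rfl, h1, h2⟩
    · exact Or.inr ⟨b, a, Sym2.eq_swap, h1, h2⟩
    · exact Or.inl ⟨b, a, Sym2.eq_swap, h1, h2⟩

lemma not_isH_and_isV {N : ℕ} {e : Sym2 (Fin N × Fin N)} (h1 : isH e) (h2 : isV e) : False := by
  obtain ⟨a, b, rfl, hab1, hab2⟩ := h1
  obtain ⟨c, d, hcd, hcd1, hcd2⟩ := h2
  rw [Sym2.eq_iff] at hcd
  rcases hcd with ⟨rfl, rfl⟩ | ⟨rfl, rfl⟩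
  · rw [hcd1] at hab2; omega
  · rw [hab1] at hcd2; omega

/-- key for picking the larger endpoint of an edge -/
def keyf {N : ℕ} (v : Fin N × Fin N) : ℕ := (v.1 : ℕ) * N + (v.2 : ℕ)

lemma keyf_lt {N : ℕ} {u v : Fin N × Fin N} (h : (u.1 : ℕ) < (v.1 : ℕ)) :
    keyf u < keyf v := by
  unfold keyf
  have h2 := u.2.isLt
  calc (u.1 : ℕ) * N + (u.2 : ℕ) < ((u.1 : ℕ) + 1) * N := by nlinarith
    _ ≤ (v.1 : ℕ) * N := Nat.mul_le_mul_right N h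
    _ ≤ (v.1 : ℕ) * N + (v.2 : ℕ) := Nat.le_add_right _ _

lemma keyf_inj {N : ℕ} {u v : Fin N × Fin N} (h : keyf u = keyf v) : u = v := by
  have hfst : (u.1 : ℕ) = (v.1 : ℕ) := by
    rcases lt_trichotomy ((u.1 : ℕ)) ((v.1 : ℕ)) with hc | hc | hc
    · exact absurd h (Nat.ne_of_lt (keyf_lt hc))
    · exact hc
    · exact absurd h.symm (Nat.ne_of_lt (keyf_lt hc))
  have hsnd : (u.2 : ℕ) = (v.2 : ℕ) := by
    unfold keyf at h; rw [hfst] at h; omega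
  exact Prod.ext (Fin.ext hfst) (Fin.ext hsnd)

/-- picks the endpoint with the larger key -/
def pickMax {N : ℕ} : Sym2 (Fin N × Fin N) → Fin N × Fin N :=
  Sym2.lift ⟨fun a b => if keyf a ≤ keyf b then b else a, by
    intro a b
    rcases le_or_gt (keyf a) (keyf b) with h | h
    · rcases lt_or_eq_of_le h with h' | h'
      · simp [le_of_lt h', not_le.2 h']
      · have : a = b := keyf_inj h'
        subst this; simp
    · simp [le_of_lt h, not_le.2 h]⟩

lemma pickMax_eq {N : ℕ} {a b : Fin N × Fin N} (h : keyf a ≤ keyf b) :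
    pickMax s(a, b) = b := by
  simp [pickMax, h]

lemma H_bound {N : ℕ} (S : Finset (Fin N × Fin N)) (F : Finset (Sym2 (Fin N × Fin N)))
    (hF : ∀ e ∈ F, isH e ∧ ∀ v ∈ e, v ∈ S) :
    F.card + (S.image Prod.snd).card ≤ S.card := by
  classical
  set T := S.filter (fun v => ∀ w ∈ S, w.2 = v.2 → (v.1 : ℕ) ≤ (w.1 : ℕ)) with hT
  -- each e ∈ F has a canonical representation
  have hrep : ∀ e ∈ F, ∃ a b : Fin N × Fin N, e = s(a, b) ∧ a.2 = b.2 ∧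
      (a.1 : ℕ) + 1 = (b.1 : ℕ) ∧ pickMax e = b ∧ a ∈ S ∧ b ∈ S := by
    intro e he
    obtain ⟨⟨a, b, rfl, h1, h2⟩, hS⟩ := hF e he
    have hk : keyf a ≤ keyf b := by
      unfold keyf
      have : (b.1 : ℕ) * N = (a.1 : ℕ) * N + N := by rw [← h2]; ring
      omega
    exact ⟨a, b, rfl, h1, h2, pickMax_eq hk,
      hS a (Sym2.mem_mk_left a b), hS b (Sym2.mem_mk_right a b)⟩
  -- pickMax is injective on F and lands in S \ T
  have hmem : ∀ e ∈ F, pickMax e ∈ S \ T := by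
    intro e he
    obtain ⟨a, b, rfl, h1, h2, hpm, haS, hbS⟩ := hrep e he
    rw [hpm]
    rw [Finset.mem_sdiff]
    refine ⟨hbS, ?_⟩
    rw [hT, Finset.mem_filter]
    push_neg
    intro _
    exact ⟨a, haS, h1, by omega⟩
  have hinj : Set.InjOn pickMax (F : Set (Sym2 (Fin N × Fin N))) := by
    intro e he e' he' hpe
    obtain ⟨a, b, rfl, h1, h2, hpm, -, -⟩ := hrep e he
    obtain ⟨a', b', rfl, h1', h2', hpm', -, -⟩ := hrep e' he'
    rw [hpm, hpm'] at hpe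
    subst hpe
    have : a = a' := by
      refine Prod.ext (Fin.ext ?_) ?_
      · omega
      · rw [h1, h1']
    rw [this]
  -- the image of T under snd is all of (S.image snd), injectively
  have hTsub : T ⊆ S := Finset.filter_subset _ _
  have hTim : T.image Prod.snd = S.image Prod.snd := by
    apply subset_antisymm (Finset.image_subset_image hTsub)
    intro r hr
    obtain ⟨v, hv, rfl⟩ := Finset.mem_image.1 hr
    obtain ⟨m, hm, hmin⟩ := Finset.exists_min_image
      (S.filter (fun w => w.2 = v.2)) (fun w => (w.1 : ℕ))
      ⟨v, Finset.mem_filter.2 ⟨hv, rfl⟩⟩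
    obtain ⟨hmS, hm2⟩ := Finset.mem_filter.1 hm
    refine Finset.mem_image.2 ⟨m, ?_, hm2⟩
    rw [hT, Finset.mem_filter]
    exact ⟨hmS, fun w hw hw2 => hmin w (Finset.mem_filter.2 ⟨hw, by rw [hw2, hm2]⟩)⟩
  have hTinj : Set.InjOn Prod.snd (T : Set (Fin N × Fin N)) := by
    intro u hu v hv huv
    obtain ⟨huS, hu'⟩ := Finset.mem_filter.1 hu
    obtain ⟨hvS, hv'⟩ := Finset.mem_filter.1 hv
    have h1 := hu' v hvS huv.symm
    have h2 := hv' u huS huv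
    exact Prod.ext (Fin.ext (by omega)) huv
  have hTcard : T.card = (S.image Prod.snd).card := by
    rw [← hTim, Finset.card_image_of_injOn hTinj]
  -- combine
  have hFcard : F.card = (F.image pickMax).card :=
    (Finset.card_image_of_injOn hinj).symm
  have hsub2 : F.image pickMax ⊆ S \ T := by
    intro w hw
    obtain ⟨e, he, rfl⟩ := Finset.mem_image.1 hw
    exact hmem e he
  have := Finset.card_le_card hsub2
  rw [Finset.card_sdiff_of_subset hTsub] at this
  have := Finset.card_le_card hTsub
  omega

/-- coordinate swap -/
def swp {N : ℕ} (v : Fin N × Fin N) : Fin N × Fin N := (v.2, v.1)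

lemma swp_inj {N : ℕ} : Function.Injective (swp (N := N)) := by
  intro u v h
  unfold swp at h
  exact Prod.ext (congrArg Prod.snd h) (congrArg Prod.fst h)

lemma V_bound {N : ℕ} (S : Finset (Fin N × Fin N)) (F : Finset (Sym2 (Fin N × Fin N)))
    (hF : ∀ e ∈ F, isV e ∧ ∀ v ∈ e, v ∈ S) :
    F.card + (S.image Prod.fst).card ≤ S.card := by
  classical
  have := H_bound (S.image swp) (F.image (Sym2.map swp)) ?_
  · rwa [Finset.card_image_of_injective _ (Sym2.map.injective swp_inj),
      Finset.card_image_of_injective _ swp_inj,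
      Finset.image_image] at this
  · intro e' he'
    obtain ⟨e, he, rfl⟩ := Finset.mem_image.1 he'
    obtain ⟨⟨a, b, rfl, h1, h2⟩, hS⟩ := hF e he
    constructor
    · exact ⟨swp a, swp b, by rw [Sym2.map_pair_eq], h1, h2⟩
    · intro v hv
      rw [Sym2.mem_map] at hv
      obtain ⟨u, hu, rfl⟩ := hv
      exact Finset.mem_image_of_mem swp (hS u hu)

lemma mem_coveredVerts {V : Type*} [Fintype V] [DecidableEq V] {Λ : Finset (Sym2 V)} {v : V} :
    v ∈ coveredVerts Λ ↔ ∃ e ∈ Λ, v ∈ e := by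
  unfold coveredVerts
  simp

lemma edge_two_mem {V : Type*} (e : Sym2 V) (hd : ¬ e.IsDiag) :
    ∃ a b, a ≠ b ∧ a ∈ e ∧ b ∈ e := by
  induction e with
  | _ a b =>
    exact ⟨a, b, fun h => hd (by rw [Sym2.mk_isDiag_iff]; exact h),
      Sym2.mem_mk_left _ _, Sym2.mem_mk_right _ _⟩

lemma same_comp {V : Type*} [Fintype V] [DecidableEq V] {Λ : Finset (Sym2 V)} {e : Sym2 V}
    (hd : ¬ e.IsDiag) (he : e ∈ Λ) {v w : V} (hv : v ∈ e) (hw : w ∈ e) :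
    (SimpleGraph.fromEdgeSet (Λ : Set (Sym2 V))).connectedComponentMk v =
      (SimpleGraph.fromEdgeSet (Λ : Set (Sym2 V))).connectedComponentMk w := by
  induction e with
  | _ a b =>
    have hab : a ≠ b := fun h => hd (by rw [Sym2.mk_isDiag_iff]; exact h)
    have hadj : (SimpleGraph.fromEdgeSet (Λ : Set (Sym2 V))).Adj a b := by
      rw [SimpleGraph.fromEdgeSet_adj]
      exact ⟨by exact_mod_cast he, hab⟩
    rw [Sym2.mem_iff] at hv hw
    rcases hv with rfl | rfl <;> rcases hw with rfl | rfl
    · rfl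
    · exact SimpleGraph.ConnectedComponent.sound hadj.reachable
    · exact SimpleGraph.ConnectedComponent.sound hadj.symm.reachable
    · rfl

lemma numComponents_eq_card_image {V : Type*} [Fintype V] [DecidableEq V]
    (Λ : Finset (Sym2 V))
    [DecidableEq (SimpleGraph.fromEdgeSet (Λ : Set (Sym2 V))).ConnectedComponent] :
    numComponents Λ = ((coveredVerts Λ).image
      (SimpleGraph.fromEdgeSet (Λ : Set (Sym2 V))).connectedComponentMk).card := by
  unfold numComponents
  rw [Nat.card_congr (Equiv.subtypeEquivRight (q := fun c => c ∈ (coveredVerts Λ).image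
      (SimpleGraph.fromEdgeSet (Λ : Set (Sym2 V))).connectedComponentMk)
      (fun c => (Finset.mem_image).symm))]
  exact Nat.card_eq_finsetCard _

lemma numComponents_eq_one {V : Type*} [Fintype V] [DecidableEq V] {Λ : Finset (Sym2 V)}
    (hne : (coveredVerts Λ).Nonempty)
    (hconn : ∀ v ∈ coveredVerts Λ, ∀ w ∈ coveredVerts Λ,
      (SimpleGraph.fromEdgeSet (Λ : Set (Sym2 V))).Reachable v w) :
    numComponents Λ = 1 := by
  obtain ⟨v₀, hv₀⟩ := hne
  unfold numComponents
  rw [Nat.card_eq_one_iff_unique]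
  constructor
  · constructor
    rintro ⟨c, hc⟩ ⟨c', hc'⟩
    obtain ⟨v, hv, rfl⟩ := hc
    obtain ⟨w, hw, rfl⟩ := hc'
    exact Subtype.ext (SimpleGraph.ConnectedComponent.sound (hconn v hv w hw))
  · exact ⟨⟨_, v₀, hv₀, rfl⟩⟩

lemma card_le_RC {N : ℕ} (S : Finset (Fin N × Fin N)) :
    S.card ≤ (S.image Prod.fst).card * (S.image Prod.snd).card := by
  rw [← Finset.card_product]
  apply Finset.card_le_card
  intro v hv
  rw [Finset.mem_product]
  exact ⟨Finset.mem_image_of_mem _ hv, Finset.mem_image_of_mem _ hv⟩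

theorem master {N : ℕ} (Λ : Finset (Sym2 (Fin N × Fin N)))
    (hsub : (Λ : Set (Sym2 (Fin N × Fin N))) ⊆ (gridGraph N).edgeSet) (hne : Λ.Nonempty) :
    ∃ S : ℕ, Λ.card ≤ WW (S + 1) ∧
      ((coveredVerts Λ).card : ℤ) - (numComponents Λ : ℤ) = S := by
  classical
  set G := SimpleGraph.fromEdgeSet ((Λ : Set (Sym2 (Fin N × Fin N)))) with hG
  set mkc := G.connectedComponentMk with hmkc
  set cover := coveredVerts Λ with hcover
  set comps := cover.image mkc with hcomps
  have hcov : ∀ e ∈ Λ, ∀ v ∈ e, v ∈ cover := by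
    intro e he v hv
    rw [hcover, mem_coveredVerts]
    exact ⟨e, he, hv⟩
  have hsame : ∀ e ∈ Λ, ∀ v ∈ e, ∀ w ∈ e, mkc v = mkc w := by
    intro e he v hv w hw
    exact same_comp ((gridGraph N).not_isDiag_of_mem_edgeSet (hsub he)) he hv hw
  set cf : Sym2 (Fin N × Fin N) → G.ConnectedComponent := fun e => mkc e.out.1 with hcf
  set Vc : G.ConnectedComponent → Finset (Fin N × Fin N) :=
    fun c => cover.filter (fun v => mkc v = c) with hVc
  set Ec : G.ConnectedComponent → Finset (Sym2 (Fin N × Fin N)) :=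
    fun c => Λ.filter (fun e => cf e = c) with hEc
  have hcf_mem : ∀ e ∈ Λ, cf e ∈ comps := fun e he =>
    Finset.mem_image_of_mem mkc (hcov e he e.out.1 (Sym2.out_fst_mem e))
  have hcardΛ : Λ.card = ∑ c ∈ comps, (Ec c).card :=
    Finset.card_eq_sum_card_fiberwise hcf_mem
  have hmk_mem : ∀ v ∈ cover, mkc v ∈ comps := fun v hv => Finset.mem_image_of_mem _ hv
  have hcardC : cover.card = ∑ c ∈ comps, (Vc c).card :=
    Finset.card_eq_sum_card_fiberwise hmk_mem
  -- each component has at least 2 vertices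
  have h2 : ∀ c ∈ comps, 2 ≤ (Vc c).card := by
    intro c hc
    obtain ⟨v, hv, rfl⟩ := Finset.mem_image.1 hc
    obtain ⟨e, he, hve⟩ := mem_coveredVerts.1 (hcover ▸ hv)
    obtain ⟨a, b, hab, ha, hb⟩ :=
      edge_two_mem e ((gridGraph N).not_isDiag_of_mem_edgeSet (hsub he))
    have hmem : ∀ u, u ∈ e → u ∈ Vc (mkc v) := by
      intro u hu
      rw [hVc, Finset.mem_filter]
      exact ⟨hcov e he u hu, hsame e he u hu v hve⟩
    calc 2 = ({a, b} : Finset (Fin N × Fin N)).card := (Finset.card_pair hab).symm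
      _ ≤ (Vc (mkc v)).card := Finset.card_le_card (by
          intro u hu
          rcases Finset.mem_insert.1 hu with rfl | hu
          · exact hmem _ ha
          · rw [Finset.mem_singleton] at hu
            subst hu
            exact hmem _ hb)
  -- per-component isoperimetric bound
  have hcomp : ∀ c ∈ comps, (Ec c).card ≤ WW ((Vc c).card) := by
    intro c hc
    have hEgood : ∀ e ∈ Ec c, e ∈ (gridGraph N).edgeSet ∧ ∀ v ∈ e, v ∈ Vc c := by
      intro e he
      obtain ⟨heΛ, hce⟩ := Finset.mem_filter.1 he
      refine ⟨hsub heΛ, fun v hv => ?_⟩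
      rw [hVc, Finset.mem_filter]
      refine ⟨hcov e heΛ v hv, ?_⟩
      rw [← hce]
      exact hsame e heΛ v hv e.out.1 (Sym2.out_fst_mem e)
    set FH := (Ec c).filter isH with hFH
    set FV := (Ec c).filter (fun e => ¬ isH e) with hFV
    have hsplit : FH.card + FV.card = (Ec c).card :=
      Finset.card_filter_add_card_filter_not _
    have hHb : FH.card + ((Vc c).image Prod.snd).card ≤ (Vc c).card := by
      apply H_bound
      intro e he
      obtain ⟨he1, he2⟩ := Finset.mem_filter.1 he
      exact ⟨he2, (hEgood e he1).2⟩
    have hVb : FV.card + ((Vc c).image Prod.fst).card ≤ (Vc c).card := by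
      apply V_bound
      intro e he
      obtain ⟨he1, he2⟩ := Finset.mem_filter.1 he
      have := isH_or_isV (hEgood e he1).1
      exact ⟨this.resolve_left he2, (hEgood e he1).2⟩
    have hRC := card_le_RC (Vc c)
    have htt : tt ((Vc c).card) ≤
        ((Vc c).image Prod.fst).card + ((Vc c).image Prod.snd).card := by
      apply tt_min
      nlinarith [hRC, two_mul_le_add_sq ((Vc c).image Prod.fst).card ((Vc c).image Prod.snd).card]
    have hle := tt_le2n ((Vc c).card)
    unfold WW
    omega
  -- fold
  have hcne : comps.Nonempty := by
    obtain ⟨e, he⟩ := hne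
    exact ⟨cf e, hcf_mem e he⟩
  have hfold : ∑ c ∈ comps, WW ((Vc c).card) ≤
      WW (∑ c ∈ comps, ((Vc c).card - 1) + 1) :=
    WW_fold comps (fun c => (Vc c).card) hcne (fun c hc => by linarith [h2 c hc])
  refine ⟨∑ c ∈ comps, ((Vc c).card - 1), ?_, ?_⟩
  · calc Λ.card = ∑ c ∈ comps, (Ec c).card := hcardΛ
      _ ≤ ∑ c ∈ comps, WW ((Vc c).card) := Finset.sum_le_sum hcomp
      _ ≤ WW (∑ c ∈ comps, ((Vc c).card - 1) + 1) := hfold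
  · have hnum : numComponents Λ = comps.card := by
      rw [hcomps, hcover, hmkc, hG]
      exact numComponents_eq_card_image Λ
    have hcast : ((∑ c ∈ comps, ((Vc c).card - 1) : ℕ) : ℤ)
        = (cover.card : ℤ) - (comps.card : ℤ) := by
      calc ((∑ c ∈ comps, ((Vc c).card - 1) : ℕ) : ℤ)
          = ∑ c ∈ comps, (((Vc c).card - 1 : ℕ) : ℤ) := Nat.cast_sum _ _
        _ = ∑ c ∈ comps, (((Vc c).card : ℤ) - 1) :=
            Finset.sum_congr rfl (fun c hc => Nat.cast_sub (by linarith [h2 c hc]))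
        _ = (∑ c ∈ comps, ((Vc c).card : ℤ)) - comps.card := by
            rw [Finset.sum_sub_distrib]
            simp
        _ = (cover.card : ℤ) - (comps.card : ℤ) := by
            rw [hcardC]
            push_cast
            ring
    rw [hnum, hcast]

/-! ### The quasi-square construction -/

/-- 1-based index of a vertex in the quasi-square enumeration of `ℕ × ℕ`. -/
def Kf : ℕ × ℕ → ℕ := fun p =>
  if p.2 < p.1 then p.1 * p.1 + p.2 + 1 else p.2 * p.2 + p.2 + p.1 + 1

/-- the m-th vertex (1-based) of the quasi-square enumeration. -/
def vvf (m : ℕ) : ℕ × ℕ :=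
  let k := Nat.sqrt (m - 1)
  if m - 1 - k * k < k then (k, m - 1 - k * k) else (m - 1 - k * k - k, k)

lemma Kf_pos (p : ℕ × ℕ) : 1 ≤ Kf p := by
  unfold Kf; split <;> omega

lemma vvf_Kf (p : ℕ × ℕ) : vvf (Kf p) = p := by
  obtain ⟨x, y⟩ := p
  unfold Kf vvf
  by_cases h : y < x
  · simp only [h, if_true]
    have hm : x * x + y + 1 - 1 = x * x + y := by omega
    rw [hm]
    have hs : Nat.sqrt (x * x + y) = x := by
      apply le_antisymm
      · have : x * x + y < (x + 1) * (x + 1) := by nlinarith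
        have := Nat.sqrt_lt.2 this
        omega
      · exact Nat.le_sqrt.2 (by omega)
    rw [hs]
    have h2 : x * x + y - x * x = y := by omega
    rw [h2]
    simp [h]
  · push_neg at h
    simp only [if_neg (by omega : ¬ y < x)]
    have hm : y * y + y + x + 1 - 1 = y * y + y + x := by omega
    rw [hm]
    have hs : Nat.sqrt (y * y + y + x) = y := by
      apply le_antisymm
      · have : y * y + y + x < (y + 1) * (y + 1) := by nlinarith
        have := Nat.sqrt_lt.2 this
        omega
      · exact Nat.le_sqrt.2 (by omega)
    rw [hs]
    have h2 : y * y + y + x - y * y = y + x := by omega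
    rw [h2]
    have h3 : ¬ y + x < y := by omega
    simp only [h3, if_false]
    have h4 : y + x - y = x := by omega
    rw [h4]

lemma Kf_vvf {m : ℕ} (hm : 1 ≤ m) : Kf (vvf m) = m := by
  unfold vvf
  set k := Nat.sqrt (m - 1) with hk
  have hk1 : k * k ≤ m - 1 := Nat.sqrt_le (m - 1)
  have hk2 : m - 1 < k * k + 2 * k + 1 := by
    nlinarith [Nat.lt_succ_sqrt (m - 1)]
  by_cases h : m - 1 - k * k < k
  · simp only [h, if_true]
    unfold Kf
    simp only [h, if_true]
    omega
  · push_neg at h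
    simp only [if_neg (by omega : ¬ m - 1 - k * k < k)]
    unfold Kf
    simp only [if_neg (by omega : ¬ k < m - 1 - k * k - k)]
    omega

lemma Kf_mono_fst (x y : ℕ) : Kf (x, y) < Kf (x + 1, y) := by
  show (if y < x then x * x + y + 1 else y * y + y + x + 1) <
    (if y < x + 1 then (x+1) * (x+1) + y + 1 else y * y + y + (x+1) + 1)
  split_ifs with h1 h2 h2
  · nlinarith
  · omega
  · have : y = x := by omega
    subst this
    nlinarith
  · omega

lemma Kf_mono_snd (x y : ℕ) : Kf (x, y) < Kf (x, y + 1) := by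
  show (if y < x then x * x + y + 1 else y * y + y + x + 1) <
    (if y + 1 < x then x * x + (y+1) + 1 else (y+1) * (y+1) + (y+1) + x + 1)
  split_ifs with h1 h2 h2
  · omega
  · have : x = y + 1 := by omega
    subst this
    nlinarith
  · omega
  · nlinarith

lemma Kf_coord_bound {Nn x y : ℕ} (h : Kf (x, y) ≤ Nn * Nn) : x < Nn ∧ y < Nn := by
  have h : (if y < x then x * x + y + 1 else y * y + y + x + 1) ≤ Nn * Nn := h
  split_ifs at h with hc
  · constructor
    · by_contra hx
      push_neg at hx
      have : Nn * Nn ≤ x * x := Nat.mul_le_mul hx hx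
      omega
    · by_contra hy
      push_neg at hy
      have hx : Nn ≤ x := by omega
      have : Nn * Nn ≤ x * x := Nat.mul_le_mul hx hx
      omega
  · push_neg at hc
    constructor
    · by_contra hx
      push_neg at hx
      have hy : Nn ≤ y := by omega
      have : Nn * Nn ≤ y * y := Nat.mul_le_mul hy hy
      omega
    · by_contra hy
      push_neg at hy
      have : Nn * Nn ≤ y * y := Nat.mul_le_mul hy hy
      omega

open Classical in
/-- first `m` vertices of the enumeration, inside the `N × N` grid. -/
noncomputable def QSF (N m : ℕ) : Finset (Fin N × Fin N) :=
  Finset.univ.filter (fun p => Kf ((p.1 : ℕ), (p.2 : ℕ)) ≤ m)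

open Classical in
/-- all grid edges within the first `m` vertices. -/
noncomputable def IndE (N m : ℕ) : Finset (Sym2 (Fin N × Fin N)) :=
  Finset.univ.filter
    (fun e => e ∈ (gridGraph N).edgeSet ∧ ∀ v ∈ e, v ∈ QSF N m)

lemma mem_QSF {N m : ℕ} {p : Fin N × Fin N} :
    p ∈ QSF N m ↔ Kf ((p.1 : ℕ), (p.2 : ℕ)) ≤ m := by
  unfold QSF
  simp

lemma mem_IndE {N m : ℕ} {e : Sym2 (Fin N × Fin N)} :
    e ∈ IndE N m ↔ e ∈ (gridGraph N).edgeSet ∧ ∀ v ∈ e, v ∈ QSF N m := by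
  unfold IndE
  simp

lemma QSF_mono {N m m' : ℕ} (h : m ≤ m') : QSF N m ⊆ QSF N m' := by
  intro p hp
  rw [mem_QSF] at *
  omega

lemma IndE_mono {N m m' : ℕ} (h : m ≤ m') : IndE N m ⊆ IndE N m' := by
  intro e he
  rw [mem_IndE] at *
  exact ⟨he.1, fun v hv => QSF_mono h (he.2 v hv)⟩

lemma exists_vertex {N m : ℕ} (hm : 1 ≤ m) (hmN : m ≤ N * N) :
    ∃ p : Fin N × Fin N, ((p.1 : ℕ), (p.2 : ℕ)) = vvf m := by
  have hK : Kf (vvf m) = m := Kf_vvf hm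
  have hb : (vvf m).1 < N ∧ (vvf m).2 < N := by
    apply Kf_coord_bound (Nn := N)
    rw [show ((vvf m).1, (vvf m).2) = vvf m from rfl, hK]
    exact hmN
  exact ⟨(⟨(vvf m).1, hb.1⟩, ⟨(vvf m).2, hb.2⟩), rfl⟩

lemma QSF_succ {N m : ℕ} (hm : 1 ≤ m) {p : Fin N × Fin N}
    (hp : ((p.1 : ℕ), (p.2 : ℕ)) = vvf (m + 1)) :
    QSF N (m + 1) = insert p (QSF N m) ∧ p ∉ QSF N m := by
  have hKp : Kf ((p.1 : ℕ), (p.2 : ℕ)) = m + 1 := by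
    rw [hp]; exact Kf_vvf (by omega)
  have hnotin : p ∉ QSF N m := by rw [mem_QSF, hKp]; omega
  refine ⟨?_, hnotin⟩
  ext q
  rw [Finset.mem_insert, mem_QSF, mem_QSF]
  constructor
  · intro h
    rcases eq_or_lt_of_le h with heq | hlt
    · left
      have hq : ((q.1 : ℕ), (q.2 : ℕ)) = vvf (m + 1) := by
        rw [← heq]
        exact (vvf_Kf _).symm
      have hqp : ((q.1 : ℕ), (q.2 : ℕ)) = ((p.1 : ℕ), (p.2 : ℕ)) := by rw [hq, hp]
      exact Prod.ext (Fin.ext (congrArg Prod.fst hqp)) (Fin.ext (congrArg Prod.snd hqp))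
    · right; omega
  · rintro (rfl | h)
    · omega
    · omega

lemma QSF_one {N : ℕ} (hN : 1 ≤ N * N) : ∃ p : Fin N × Fin N,
    ((p.1 : ℕ), (p.2 : ℕ)) = vvf 1 ∧ QSF N 1 = {p} := by
  obtain ⟨p, hp⟩ := exists_vertex (le_refl 1) hN
  refine ⟨p, hp, ?_⟩
  ext q
  rw [mem_QSF, Finset.mem_singleton]
  constructor
  · intro h
    have h1 : Kf ((q.1 : ℕ), (q.2 : ℕ)) = 1 := le_antisymm h (Kf_pos _)
    have hq : ((q.1 : ℕ), (q.2 : ℕ)) = vvf 1 := by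
      rw [← h1]; exact (vvf_Kf _).symm
    have hqp : ((q.1 : ℕ), (q.2 : ℕ)) = ((p.1 : ℕ), (p.2 : ℕ)) := by rw [hq, hp]
    exact Prod.ext (Fin.ext (congrArg Prod.fst hqp)) (Fin.ext (congrArg Prod.snd hqp))
  · rintro rfl
    rw [show ((q.1 : ℕ), (q.2 : ℕ)) = vvf 1 from hp, Kf_vvf (le_refl 1)]

lemma QSF_card {N : ℕ} : ∀ m, 1 ≤ m → m ≤ N * N → (QSF N m).card = m := by
  intro m
  induction m with
  | zero => omega
  | succ m ih =>
    intro h1 hN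
    rcases Nat.lt_or_ge m 1 with hm0 | hm1
    · have : m = 0 := by omega
      subst this
      obtain ⟨p, -, hsing⟩ := QSF_one (N := N) (by omega)
      rw [hsing, Finset.card_singleton]
    · obtain ⟨p, hp⟩ := exists_vertex (by omega) hN
      obtain ⟨hins, hnot⟩ := QSF_succ hm1 hp
      rw [hins, Finset.card_insert_of_notMem hnot, ih hm1 (by omega)]

lemma mem_IndE_pair {N m : ℕ} {a b : Fin N × Fin N} (hadj : (gridGraph N).Adj a b)
    (ha : a ∈ QSF N m) (hb : b ∈ QSF N m) : s(a, b) ∈ IndE N m := by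
  rw [mem_IndE]
  refine ⟨by rw [SimpleGraph.mem_edgeSet]; exact hadj, fun v hv => ?_⟩
  rw [Sym2.mem_iff] at hv
  rcases hv with rfl | rfl
  · exact ha
  · exact hb

/-- the new vertex `p` at step `m+1` together with its primary neighbour `q0`. -/
lemma prim {N m : ℕ} (hm : 1 ≤ m) (hmN : m + 1 ≤ N * N) :
    ∃ p q0 : Fin N × Fin N, ((p.1 : ℕ), (p.2 : ℕ)) = vvf (m + 1) ∧
      q0 ∈ QSF N m ∧ p ≠ q0 ∧ s(p, q0) ∈ IndE N (m + 1) := by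
  obtain ⟨p, hp⟩ := exists_vertex (by omega) hmN
  have hKp : Kf ((p.1 : ℕ), (p.2 : ℕ)) = m + 1 := by
    rw [hp]; exact Kf_vvf (by omega)
  have hxy : 1 ≤ (p.1 : ℕ) ∨ 1 ≤ (p.2 : ℕ) := by
    by_contra h
    push_neg at h
    have h1 : (p.1 : ℕ) = 0 := by omega
    have h2 : (p.2 : ℕ) = 0 := by omega
    rw [h1, h2] at hKp
    have : Kf (0, 0) = 1 := by
      show (if (0:ℕ) < (0:ℕ) then 0*0+0+1 else 0*0+0+0+1) = 1
      simp
    omega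
  have hpself : p ∈ QSF N (m + 1) := by rw [mem_QSF, hKp]
  rcases hxy with hx | hy
  · -- use the left neighbour
    have hlt : (p.1 : ℕ) - 1 < N := by have := p.1.isLt; omega
    set q0 : Fin N × Fin N := (⟨(p.1 : ℕ) - 1, hlt⟩, p.2) with hq0
    have hcoord1 : (q0.1 : ℕ) = (p.1 : ℕ) - 1 := rfl
    have hcoord2 : (q0.2 : ℕ) = (p.2 : ℕ) := rfl
    have hmem : q0 ∈ QSF N m := by
      rw [mem_QSF, hcoord1, hcoord2]
      have := Kf_mono_fst ((p.1 : ℕ) - 1) (p.2 : ℕ)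
      rw [show (p.1 : ℕ) - 1 + 1 = (p.1 : ℕ) by omega] at this
      omega
    have hrel : relG q0 p := Or.inr ⟨by rw [hq0], by rw [hcoord1]; omega⟩
    have hadj : (gridGraph N).Adj p q0 := grid_adj.2 (Or.inr hrel)
    exact ⟨p, q0, hp, hmem, fun h => relG_ne hrel h.symm,
      mem_IndE_pair hadj hpself (QSF_mono (Nat.le_succ m) hmem)⟩
  · -- use the lower neighbour
    have hlt : (p.2 : ℕ) - 1 < N := by have := p.2.isLt; omega
    set q0 : Fin N × Fin N := (p.1, ⟨(p.2 : ℕ) - 1, hlt⟩) with hq0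
    have hcoord1 : (q0.1 : ℕ) = (p.1 : ℕ) := rfl
    have hcoord2 : (q0.2 : ℕ) = (p.2 : ℕ) - 1 := rfl
    have hmem : q0 ∈ QSF N m := by
      rw [mem_QSF, hcoord1, hcoord2]
      have := Kf_mono_snd (p.1 : ℕ) ((p.2 : ℕ) - 1)
      rw [show (p.2 : ℕ) - 1 + 1 = (p.2 : ℕ) by omega] at this
      omega
    have hrel : relG q0 p := Or.inl ⟨by rw [hq0], by rw [hcoord2]; omega⟩
    have hadj : (gridGraph N).Adj p q0 := grid_adj.2 (Or.inr hrel)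
    exact ⟨p, q0, hp, hmem, fun h => relG_ne hrel h.symm,
      mem_IndE_pair hadj hpself (QSF_mono (Nat.le_succ m) hmem)⟩

lemma IndE_conn {N : ℕ} : ∀ m, 1 ≤ m → m ≤ N * N → ∀ u ∈ QSF N m, ∀ w ∈ QSF N m,
    (SimpleGraph.fromEdgeSet ((IndE N m : Set (Sym2 (Fin N × Fin N))))).Reachable u w := by
  intro m
  induction m with
  | zero => omega
  | succ m ih =>
    intro h1 hN u hu w hw
    rcases Nat.lt_or_ge m 1 with hm0 | hm1
    · have : m = 0 := by omega
      subst this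
      obtain ⟨p, -, hsing⟩ := QSF_one (N := N) (by omega)
      rw [hsing, Finset.mem_singleton] at hu hw
      rw [hu, hw]
    · obtain ⟨p, q0, hp, hq0, hne, hedge⟩ := prim hm1 hN
      obtain ⟨hins, hnot⟩ := QSF_succ hm1 hp
      have hmono : (SimpleGraph.fromEdgeSet ((IndE N m : Set (Sym2 (Fin N × Fin N))))) ≤
          SimpleGraph.fromEdgeSet ((IndE N (m+1) : Set (Sym2 (Fin N × Fin N)))) :=
        SimpleGraph.fromEdgeSet_mono (by exact_mod_cast IndE_mono (Nat.le_succ m))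
      have hold : ∀ a ∈ QSF N m, ∀ b ∈ QSF N m,
          (SimpleGraph.fromEdgeSet ((IndE N (m+1) : Set (Sym2 (Fin N × Fin N))))).Reachable a b :=
        fun a ha b hb => (ih hm1 (by omega) a ha b hb).mono hmono
      have hadjpq : (SimpleGraph.fromEdgeSet
          ((IndE N (m+1) : Set (Sym2 (Fin N × Fin N))))).Adj p q0 := by
        rw [SimpleGraph.fromEdgeSet_adj]
        exact ⟨by exact_mod_cast hedge, hne⟩
      rw [hins] at hu hw
      rcases Finset.mem_insert.1 hu with rfl | hu' <;>
        rcases Finset.mem_insert.1 hw with rfl | hw'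
      · rfl
      · exact hadjpq.reachable.trans (hold q0 hq0 w hw')
      · exact (hold u hu' q0 hq0).trans hadjpq.symm.reachable
      · exact hold u hu' w hw'

lemma IndE_cover {N : ℕ} : ∀ m, 2 ≤ m → m ≤ N * N → ∀ u ∈ QSF N m,
    ∃ e ∈ IndE N m, u ∈ e := by
  intro m
  induction m with
  | zero => omega
  | succ m ih =>
    intro h2 hN u hu
    have hm1 : 1 ≤ m := by omega
    obtain ⟨p, q0, hp, hq0, hne, hedge⟩ := prim hm1 hN
    obtain ⟨hins, hnot⟩ := QSF_succ hm1 hp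
    rw [hins] at hu
    rcases Finset.mem_insert.1 hu with rfl | hu'
    · exact ⟨s(u, q0), hedge, Sym2.mem_mk_left _ _⟩
    · rcases Nat.lt_or_ge m 2 with hm2 | hm2
      · have : m = 1 := by omega
        subst this
        obtain ⟨p1, -, hsing⟩ := QSF_one (N := N) (by omega)
        rw [hsing, Finset.mem_singleton] at hu' hq0
        rw [hu', ← hq0]
        exact ⟨s(p, q0), hedge, Sym2.mem_mk_right _ _⟩
      · obtain ⟨e, he, hue⟩ := ih hm2 (by omega) u hu'
        exact ⟨e, IndE_mono (Nat.le_succ m) he, hue⟩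

lemma IndE_one {N : ℕ} : IndE N 1 = (∅ : Finset (Sym2 (Fin N × Fin N))) := by
  rw [Finset.eq_empty_iff_forall_notMem]
  intro e he
  rw [mem_IndE] at he
  obtain ⟨hes, hev⟩ := he
  obtain ⟨a, b, hab, ha, hb⟩ := edge_two_mem e ((gridGraph N).not_isDiag_of_mem_edgeSet hes)
  have ha1 : Kf ((a.1 : ℕ), (a.2 : ℕ)) = 1 := le_antisymm (mem_QSF.1 (hev a ha)) (Kf_pos _)
  have hb1 : Kf ((b.1 : ℕ), (b.2 : ℕ)) = 1 := le_antisymm (mem_QSF.1 (hev b hb)) (Kf_pos _)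
  have hav : ((a.1 : ℕ), (a.2 : ℕ)) = vvf 1 := by rw [← ha1]; exact (vvf_Kf _).symm
  have hbv : ((b.1 : ℕ), (b.2 : ℕ)) = vvf 1 := by rw [← hb1]; exact (vvf_Kf _).symm
  have hab2 : ((a.1 : ℕ), (a.2 : ℕ)) = ((b.1 : ℕ), (b.2 : ℕ)) := by rw [hav, hbv]
  exact hab (Prod.ext (Fin.ext (congrArg Prod.fst hab2)) (Fin.ext (congrArg Prod.snd hab2)))

lemma left_vertex {N m : ℕ} {p : Fin N × Fin N}
    (hKp : Kf ((p.1 : ℕ), (p.2 : ℕ)) = m + 1) (hx : 1 ≤ (p.1 : ℕ)) :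
    ∃ q : Fin N × Fin N, (q.1 : ℕ) = (p.1 : ℕ) - 1 ∧ (q.2 : ℕ) = (p.2 : ℕ) ∧
      q ∈ QSF N m ∧ s(p, q) ∈ IndE N (m + 1) := by
  have hlt : (p.1 : ℕ) - 1 < N := by have := p.1.isLt; omega
  refine ⟨(⟨(p.1 : ℕ) - 1, hlt⟩, p.2), rfl, rfl, ?_, ?_⟩
  · rw [mem_QSF]
    show Kf ((p.1 : ℕ) - 1, (p.2 : ℕ)) ≤ m
    have := Kf_mono_fst ((p.1 : ℕ) - 1) (p.2 : ℕ)
    rw [show (p.1 : ℕ) - 1 + 1 = (p.1 : ℕ) by omega] at this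
    exact by omega
  · have hrel : relG ((⟨(p.1 : ℕ) - 1, hlt⟩, p.2) : Fin N × Fin N) p :=
      Or.inr ⟨rfl, by show (p.1 : ℕ) - 1 + 1 = (p.1 : ℕ); omega⟩
    refine mem_IndE_pair (grid_adj.2 (Or.inr hrel)) (by rw [mem_QSF, hKp]) ?_
    apply QSF_mono (Nat.le_succ m)
    rw [mem_QSF]
    show Kf ((p.1 : ℕ) - 1, (p.2 : ℕ)) ≤ m
    have := Kf_mono_fst ((p.1 : ℕ) - 1) (p.2 : ℕ)
    rw [show (p.1 : ℕ) - 1 + 1 = (p.1 : ℕ) by omega] at this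
    exact by omega

lemma down_vertex {N m : ℕ} {p : Fin N × Fin N}
    (hKp : Kf ((p.1 : ℕ), (p.2 : ℕ)) = m + 1) (hy : 1 ≤ (p.2 : ℕ)) :
    ∃ q : Fin N × Fin N, (q.1 : ℕ) = (p.1 : ℕ) ∧ (q.2 : ℕ) = (p.2 : ℕ) - 1 ∧
      q ∈ QSF N m ∧ s(p, q) ∈ IndE N (m + 1) := by
  have hlt : (p.2 : ℕ) - 1 < N := by have := p.2.isLt; omega
  refine ⟨(p.1, ⟨(p.2 : ℕ) - 1, hlt⟩), rfl, rfl, ?_, ?_⟩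
  · rw [mem_QSF]
    show Kf ((p.1 : ℕ), (p.2 : ℕ) - 1) ≤ m
    have := Kf_mono_snd (p.1 : ℕ) ((p.2 : ℕ) - 1)
    rw [show (p.2 : ℕ) - 1 + 1 = (p.2 : ℕ) by omega] at this
    exact by omega
  · have hrel : relG ((p.1, ⟨(p.2 : ℕ) - 1, hlt⟩) : Fin N × Fin N) p :=
      Or.inl ⟨rfl, by show (p.2 : ℕ) - 1 + 1 = (p.2 : ℕ); omega⟩
    refine mem_IndE_pair (grid_adj.2 (Or.inr hrel)) (by rw [mem_QSF, hKp]) ?_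
    apply QSF_mono (Nat.le_succ m)
    rw [mem_QSF]
    show Kf ((p.1 : ℕ), (p.2 : ℕ) - 1) ≤ m
    have := Kf_mono_snd (p.1 : ℕ) ((p.2 : ℕ) - 1)
    rw [show (p.2 : ℕ) - 1 + 1 = (p.2 : ℕ) by omega] at this
    exact by omega

lemma En_succ {N m : ℕ} (hm : 1 ≤ m) (hmN : m + 1 ≤ N * N) :
    (IndE N (m + 1)).card = (IndE N m).card +
      ((if 1 ≤ (vvf (m + 1)).1 then 1 else 0) + (if 1 ≤ (vvf (m + 1)).2 then 1 else 0)) := by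
  classical
  obtain ⟨p, hp⟩ := exists_vertex (N := N) (by omega) hmN
  have hKp : Kf ((p.1 : ℕ), (p.2 : ℕ)) = m + 1 := by rw [hp]; exact Kf_vvf (by omega)
  obtain ⟨hins, hnot⟩ := QSF_succ hm hp
  have hx1 : (vvf (m + 1)).1 = (p.1 : ℕ) := by rw [← hp]
  have hy1 : (vvf (m + 1)).2 = (p.2 : ℕ) := by rw [← hp]
  set newE := (IndE N (m + 1)).filter (fun e => p ∈ e) with hnewE
  have hsubm : IndE N m ⊆ IndE N (m + 1) := IndE_mono (Nat.le_succ m)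
  have hunion : IndE N (m + 1) = IndE N m ∪ newE := by
    ext e
    rw [Finset.mem_union, hnewE, Finset.mem_filter]
    constructor
    · intro he
      by_cases hpe : p ∈ e
      · exact Or.inr ⟨he, hpe⟩
      · left
        rw [mem_IndE] at he ⊢
        refine ⟨he.1, fun v hv => ?_⟩
        have hv2 := he.2 v hv
        rw [hins, Finset.mem_insert] at hv2
        rcases hv2 with rfl | h
        · exact absurd hv hpe
        · exact h
    · rintro (he | ⟨he, -⟩)
      · exact hsubm he
      · exact he
  have hdisj : Disjoint (IndE N m) newE := by
    rw [Finset.disjoint_left]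
    intro e he henew
    rw [hnewE, Finset.mem_filter] at henew
    rw [mem_IndE] at he
    exact hnot (he.2 p henew.2)
  rw [hunion, Finset.card_union_of_disjoint hdisj]
  congr 1
  rw [hx1, hy1]
  -- characterize members of newE
  have hchar : ∀ e ∈ newE, ∃ q : Fin N × Fin N, e = s(p, q) ∧
      (((q.1 : ℕ) = (p.1 : ℕ) - 1 ∧ 1 ≤ (p.1 : ℕ) ∧ (q.2 : ℕ) = (p.2 : ℕ)) ∨
       ((q.1 : ℕ) = (p.1 : ℕ) ∧ (q.2 : ℕ) = (p.2 : ℕ) - 1 ∧ 1 ≤ (p.2 : ℕ))) := by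
    intro e he
    rw [hnewE, Finset.mem_filter] at he
    obtain ⟨heI, hpe⟩ := he
    obtain ⟨q, rfl⟩ := Sym2.mem_iff_exists.1 hpe
    rw [mem_IndE] at heI
    obtain ⟨hes, hev⟩ := heI
    have hrel : relG p q ∨ relG q p := mem_grid_edgeSet.1 hes
    have hpq : p ≠ q := by
      rcases hrel with h | h
      · exact relG_ne h
      · exact (relG_ne h).symm
    have hq1 : q ∈ QSF N (m + 1) := hev q (Sym2.mem_mk_right _ _)
    have hqm : q ∈ QSF N m := by
      rw [hins, Finset.mem_insert] at hq1
      rcases hq1 with rfl | h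
      · exact absurd rfl hpq
      · exact h
    have hqK : Kf ((q.1 : ℕ), (q.2 : ℕ)) ≤ m := mem_QSF.1 hqm
    refine ⟨q, rfl, ?_⟩
    rcases hrel with (⟨h1, h2⟩ | ⟨h1, h2⟩) | (⟨h1, h2⟩ | ⟨h1, h2⟩)
    · exfalso
      have hco : ((q.1 : ℕ), (q.2 : ℕ)) = ((p.1 : ℕ), (p.2 : ℕ) + 1) := by
        rw [← h2, ← h1]
      rw [hco] at hqK
      have := Kf_mono_snd (p.1 : ℕ) (p.2 : ℕ)
      omega
    · exfalso
      have hco : ((q.1 : ℕ), (q.2 : ℕ)) = ((p.1 : ℕ) + 1, (p.2 : ℕ)) := by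
        rw [← h2, ← h1]
      rw [hco] at hqK
      have := Kf_mono_fst (p.1 : ℕ) (p.2 : ℕ)
      omega
    · right
      refine ⟨(congrArg (fun z : Fin N => (z : ℕ)) h1), by omega, by omega⟩
    · left
      refine ⟨by omega, by omega, (congrArg (fun z : Fin N => (z : ℕ)) h1)⟩
  by_cases hx : 1 ≤ (p.1 : ℕ) <;> by_cases hy : 1 ≤ (p.2 : ℕ)
  · -- two new edges
    obtain ⟨qL, hL1, hL2, hLm, hLe⟩ := left_vertex hKp hx
    obtain ⟨qD, hD1, hD2, hDm, hDe⟩ := down_vertex hKp hy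
    have hset : newE = {s(p, qL), s(p, qD)} := by
      apply subset_antisymm
      · intro e he
        obtain ⟨q, rfl, hcases⟩ := hchar e he
        rcases hcases with ⟨c1, -, c2⟩ | ⟨c1, c2, -⟩
        · have : q = qL := Prod.ext (Fin.ext (by omega)) (Fin.ext (by omega))
          rw [this]
          exact Finset.mem_insert_self _ _
        · have : q = qD := Prod.ext (Fin.ext (by omega)) (Fin.ext (by omega))
          rw [this]
          exact Finset.mem_insert_of_mem (Finset.mem_singleton_self _)
      · intro e he
        rcases Finset.mem_insert.1 he with rfl | he'
        · rw [hnewE, Finset.mem_filter]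
          exact ⟨hLe, Sym2.mem_mk_left _ _⟩
        · rw [Finset.mem_singleton] at he'
          subst he'
          rw [hnewE, Finset.mem_filter]
          exact ⟨hDe, Sym2.mem_mk_left _ _⟩
    rw [hset, if_pos hx, if_pos hy]
    rw [Finset.card_insert_of_notMem, Finset.card_singleton]
    rw [Finset.mem_singleton]
    intro hcon
    rw [Sym2.eq_iff] at hcon
    rcases hcon with ⟨-, hcon⟩ | ⟨hcon1, hcon2⟩
    · have := congrArg (fun z : Fin N × Fin N => (z.1 : ℕ)) hcon
      omega
    · have := congrArg (fun z : Fin N × Fin N => (z.2 : ℕ)) hcon1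
      omega
  · -- only left edge
    obtain ⟨qL, hL1, hL2, hLm, hLe⟩ := left_vertex hKp hx
    have hset : newE = {s(p, qL)} := by
      apply subset_antisymm
      · intro e he
        obtain ⟨q, rfl, hcases⟩ := hchar e he
        rcases hcases with ⟨c1, -, c2⟩ | ⟨-, -, c3⟩
        · have : q = qL := Prod.ext (Fin.ext (by omega)) (Fin.ext (by omega))
          rw [this]
          exact Finset.mem_singleton_self _
        · omega
      · intro e he
        rw [Finset.mem_singleton] at he
        subst he
        rw [hnewE, Finset.mem_filter]
        exact ⟨hLe, Sym2.mem_mk_left _ _⟩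
    rw [hset, if_pos hx, if_neg hy, Finset.card_singleton]
  · -- only down edge
    obtain ⟨qD, hD1, hD2, hDm, hDe⟩ := down_vertex hKp hy
    have hset : newE = {s(p, qD)} := by
      apply subset_antisymm
      · intro e he
        obtain ⟨q, rfl, hcases⟩ := hchar e he
        rcases hcases with ⟨-, c2, -⟩ | ⟨c1, c2, -⟩
        · omega
        · have : q = qD := Prod.ext (Fin.ext (by omega)) (Fin.ext (by omega))
          rw [this]
          exact Finset.mem_singleton_self _
      · intro e he
        rw [Finset.mem_singleton] at he
        subst he
        rw [hnewE, Finset.mem_filter]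
        exact ⟨hDe, Sym2.mem_mk_left _ _⟩
    rw [hset, if_neg hx, if_pos hy, Finset.card_singleton]
  · exfalso
    have h1 : (p.1 : ℕ) = 0 := by omega
    have h2 : (p.2 : ℕ) = 0 := by omega
    rw [h1, h2] at hKp
    have : Kf (0, 0) = 1 := by
      show (if (0 : ℕ) < (0 : ℕ) then 0 * 0 + 0 + 1 else 0 * 0 + 0 + 0 + 1) = 1
      simp
    omega

lemma IndE_sub_edgeSet {N m : ℕ} :
    (IndE N m : Set (Sym2 (Fin N × Fin N))) ⊆ (gridGraph N).edgeSet := by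
  intro e he
  rw [Finset.mem_coe, mem_IndE] at he
  exact he.1

lemma covered_IndE {N m : ℕ} (h2 : 2 ≤ m) (hN : m ≤ N * N) :
    coveredVerts (IndE N m) = QSF N m := by
  ext v
  rw [mem_coveredVerts]
  constructor
  · rintro ⟨e, he, hv⟩
    exact (mem_IndE.1 he).2 v hv
  · intro hv
    exact IndE_cover m h2 hN v hv

lemma IndE_nonempty {N m : ℕ} (h2 : 2 ≤ m) (hN : m ≤ N * N) : (IndE N m).Nonempty := by
  have h1N : 1 ≤ N * N := by omega
  obtain ⟨p, hp, hsing⟩ := QSF_one (N := N) h1N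
  have hpm : p ∈ QSF N m :=
    QSF_mono (show 1 ≤ m by omega) (by rw [hsing]; exact Finset.mem_singleton_self p)
  obtain ⟨e, he, -⟩ := IndE_cover m h2 hN p hpm
  exact ⟨e, he⟩

lemma En_le {N m : ℕ} (h1 : 1 ≤ m) (hN : m ≤ N * N) : (IndE N m).card ≤ WW m := by
  rcases Nat.lt_or_ge m 2 with hm2 | hm2
  · have : m = 1 := by omega
    subst this
    rw [IndE_one]
    simp
  · obtain ⟨S, hb, hcast⟩ := master (IndE N m) IndE_sub_edgeSet (IndE_nonempty hm2 hN)
    have hcov : coveredVerts (IndE N m) = QSF N m := covered_IndE hm2 hN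
    have hcc : (coveredVerts (IndE N m)).card = m := by
      rw [hcov]; exact QSF_card m (by omega) hN
    have hnum : numComponents (IndE N m) = 1 := by
      apply numComponents_eq_one
      · obtain ⟨e, he⟩ := IndE_nonempty hm2 hN
        exact ⟨e.out.1, mem_coveredVerts.2 ⟨e, he, Sym2.out_fst_mem e⟩⟩
      · intro v hv w hw
        rw [hcov] at hv hw
        exact IndE_conn m (by omega) hN v hv w hw
    rw [hcc, hnum] at hcast
    have hS1 : S + 1 = m := by omega
    rw [hS1] at hb
    exact hb

lemma En_ge {N : ℕ} : ∀ m, 1 ≤ m → m ≤ N * N → WW m ≤ (IndE N m).card := by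
  intro m
  induction m with
  | zero => omega
  | succ m ih =>
    intro h1 hN
    rcases Nat.lt_or_ge m 1 with hm0 | hm1
    · have : m = 0 := by omega
      subst this
      show WW 1 ≤ (IndE N 1).card
      have h2 := tt_ge2 (le_refl 1)
      have h3 := tt_le2n 1
      have hW : WW 1 = 0 := by unfold WW; omega
      omega
    · have hstep := En_succ (N := N) hm1 hN
      have hih := ih hm1 (by omega)
      show WW (m + 1) ≤ (IndE N (m + 1)).card
      have hKv' : Kf ((vvf (m + 1)).1, (vvf (m + 1)).2) = m + 1 := by
        rw [show ((vvf (m + 1)).1, (vvf (m + 1)).2) = vvf (m + 1) from rfl]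
        exact Kf_vvf (by omega)
      by_cases hx : 1 ≤ (vvf (m + 1)).1 <;> by_cases hy : 1 ≤ (vvf (m + 1)).2
      · rw [if_pos hx, if_pos hy] at hstep
        have hmono : tt m ≤ tt (m + 1) := tt_mono (by omega)
        have hle := tt_le2n m
        unfold WW at *
        omega
      · rw [if_pos hx, if_neg hy] at hstep
        set a := (vvf (m + 1)).1 with ha
        have hy0 : (vvf (m + 1)).2 = 0 := by omega
        have hK : Kf (a, 0) = m + 1 := by rw [← hy0]; exact hKv'
        have hKa : a * a + 1 = m + 1 := by
          have hshow : Kf (a, 0) = a * a + 0 + 1 := by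
            show (if 0 < a then a * a + 0 + 1 else 0 * 0 + 0 + a + 1) = _
            rw [if_pos (by omega)]
          omega
        have hma : m = a * a := by omega
        have ht1 : tt m = 2 * a := by rw [hma]; exact tt_sq hx
        have ht2 : tt (m + 1) = 2 * a + 1 := by
          rw [show m + 1 = a * a + 1 by omega]; exact tt_sq1 hx
        unfold WW at *
        omega
      · rw [if_neg hx, if_pos hy] at hstep
        set b := (vvf (m + 1)).2 with hb
        have hx0 : (vvf (m + 1)).1 = 0 := by omega
        have hK : Kf (0, b) = m + 1 := by rw [← hx0]; exact hKv'
        have hKb : b * b + b + 1 = m + 1 := by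
          have hshow : Kf (0, b) = b * b + b + 0 + 1 := by
            show (if b < 0 then 0 * 0 + b + 1 else b * b + b + 0 + 1) = _
            rw [if_neg (by omega)]
          omega
        have hmb : m = b * b + b := by omega
        have ht1 : tt m = 2 * b + 1 := by rw [hmb]; exact tt_sqk hy
        have ht2 : tt (m + 1) = 2 * b + 2 := by
          rw [show m + 1 = b * b + b + 1 by omega]; exact tt_sqk1 hy
        unfold WW at *
        omega
      · exfalso
        have h1' : (vvf (m + 1)).1 = 0 := by omega
        have h2' : (vvf (m + 1)).2 = 0 := by omega
        rw [h1', h2'] at hKv'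
        have : Kf (0, 0) = 1 := by
          show (if (0 : ℕ) < 0 then 0 * 0 + 0 + 1 else 0 * 0 + 0 + 0 + 1) = 1
          simp
        omega

theorem construct {N ℓ n : ℕ} (hl : 1 ≤ ℓ) (hn2 : 2 ≤ n) (hnN : n ≤ N * N)
    (hWn : ℓ ≤ WW n) (hWn1 : WW (n - 1) < ℓ) :
    ∃ Λ₀ : Finset (Sym2 (Fin N × Fin N)),
      (Λ₀ : Set (Sym2 (Fin N × Fin N))) ⊆ (gridGraph N).edgeSet ∧
      Λ₀.card = ℓ ∧ numComponents Λ₀ = 1 ∧ (coveredVerts Λ₀).card ≤ n := by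
  classical
  obtain ⟨m, rfl⟩ : ∃ m, n = m + 1 := ⟨n - 1, by omega⟩
  have hm1 : 1 ≤ m := by omega
  have hEm_le : (IndE N m).card ≤ WW m := En_le hm1 (by omega)
  have hEm1_ge : WW (m + 1) ≤ (IndE N (m + 1)).card := En_ge (m + 1) (by omega) hnN
  have hstep := En_succ (N := N) hm1 hnN
  have hlt : (IndE N m).card < ℓ := by
    have hWm : WW (m + 1 - 1) = WW m := by rw [show m + 1 - 1 = m by omega]
    omega
  have hle : ℓ ≤ (IndE N (m + 1)).card := le_trans hWn hEm1_ge
  rcases Nat.eq_or_lt_of_le hle with heq | hlt2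
  · refine ⟨IndE N (m + 1), IndE_sub_edgeSet, heq.symm, ?_, ?_⟩
    · apply numComponents_eq_one
      · obtain ⟨e, he⟩ := IndE_nonempty hn2 hnN
        exact ⟨e.out.1, mem_coveredVerts.2 ⟨e, he, Sym2.out_fst_mem e⟩⟩
      · intro v hv w hw
        rw [covered_IndE hn2 hnN] at hv hw
        exact IndE_conn (m + 1) (by omega) hnN v hv w hw
    · rw [covered_IndE hn2 hnN, QSF_card (m + 1) (by omega) hnN]
  · have hc2 : (IndE N (m + 1)).card ≤ (IndE N m).card + 2 := by
      rw [hstep]; split_ifs <;> omega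
    have hℓeq : ℓ = (IndE N m).card + 1 := by omega
    obtain ⟨p, q0, hp, hq0, hne, hedge⟩ := prim hm1 hnN
    set Λ₀ := insert (s(p, q0)) (IndE N m) with hΛ₀
    have hpnot : p ∉ QSF N m := (QSF_succ hm1 hp).2
    have hnew : s(p, q0) ∉ IndE N m := by
      intro hcon
      exact hpnot ((mem_IndE.1 hcon).2 p (Sym2.mem_mk_left _ _))
    have hcard : Λ₀.card = ℓ := by
      rw [hΛ₀, Finset.card_insert_of_notMem hnew]
      omega
    have hcovsub : ∀ v ∈ coveredVerts Λ₀, v ∈ insert p (QSF N m) := by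
      intro v hv
      obtain ⟨e, he, hve⟩ := mem_coveredVerts.1 hv
      rw [hΛ₀, Finset.mem_insert] at he
      rcases he with rfl | he'
      · rw [Sym2.mem_iff] at hve
        rcases hve with rfl | rfl
        · exact Finset.mem_insert_self _ _
        · exact Finset.mem_insert_of_mem hq0
      · exact Finset.mem_insert_of_mem ((mem_IndE.1 he').2 v hve)
    have hadj : (SimpleGraph.fromEdgeSet (Λ₀ : Set (Sym2 (Fin N × Fin N)))).Adj p q0 := by
      rw [SimpleGraph.fromEdgeSet_adj]
      constructor
      · rw [Finset.mem_coe, hΛ₀]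
        exact Finset.mem_insert_self _ _
      · exact hne
    have hmono : SimpleGraph.fromEdgeSet ((IndE N m : Set (Sym2 (Fin N × Fin N)))) ≤
        SimpleGraph.fromEdgeSet (Λ₀ : Set (Sym2 (Fin N × Fin N))) := by
      apply SimpleGraph.fromEdgeSet_mono
      intro e he
      rw [Finset.mem_coe] at *
      rw [hΛ₀]
      exact Finset.mem_insert_of_mem he
    have hreach : ∀ v ∈ insert p (QSF N m),
        (SimpleGraph.fromEdgeSet (Λ₀ : Set (Sym2 (Fin N × Fin N)))).Reachable v q0 := by
      intro v hv
      rcases Finset.mem_insert.1 hv with rfl | hv'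
      · exact hadj.reachable
      · exact ((IndE_conn m hm1 (by omega) v hv' q0 hq0)).mono hmono
    refine ⟨Λ₀, ?_, hcard, ?_, ?_⟩
    · intro e he
      rw [Finset.mem_coe, hΛ₀, Finset.mem_insert] at he
      rcases he with rfl | he'
      · exact (mem_IndE.1 hedge).1
      · exact (mem_IndE.1 he').1
    · apply numComponents_eq_one
      · refine ⟨p, mem_coveredVerts.2 ⟨s(p, q0), ?_, Sym2.mem_mk_left _ _⟩⟩
        rw [hΛ₀]
        exact Finset.mem_insert_self _ _
      · intro v hv w hw
        exact (hreach v (hcovsub v hv)).trans (hreach w (hcovsub w hw)).symm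
    · calc (coveredVerts Λ₀).card ≤ (insert p (QSF N m)).card :=
            Finset.card_le_card (fun v hv => hcovsub v hv)
        _ ≤ (QSF N m).card + 1 := Finset.card_insert_le _ _
        _ = m + 1 := by rw [QSF_card m hm1 (by omega)]

end GridThm



/-- for `1 ≤ ℓ ≤ |E| = 2N(N−1)`, the minimum of `|V(Λ)| − J(Λ)` over
all edge sets `Λ` of the grid graph with `|Λ| ≥ ℓ` is attained at some connected `Λ`
with exactly `ℓ` edges (i.e. `J(Λ) = 1`). -/
theorem grid_min_attained_connected
    (N ℓ : ℕ) (h1 : 1 ≤ ℓ) (hℓ : ℓ ≤ 2 * N * (N - 1)) :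
    ∃ Λ₀ : Finset (Sym2 (Fin N × Fin N)),
      (Λ₀ : Set (Sym2 (Fin N × Fin N))) ⊆ (gridGraph N).edgeSet ∧
      Λ₀.card = ℓ ∧ numComponents Λ₀ = 1 ∧
      ∀ Λ : Finset (Sym2 (Fin N × Fin N)),
        (Λ : Set (Sym2 (Fin N × Fin N))) ⊆ (gridGraph N).edgeSet → ℓ ≤ Λ.card →
        ((coveredVerts Λ₀).card : ℤ) - numComponents Λ₀ ≤
          ((coveredVerts Λ).card : ℤ) - numComponents Λ := by
  classical
  have hN1 : 1 ≤ N := by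
    rcases Nat.eq_zero_or_pos N with h | h
    · subst h; simp at hℓ; omega
    · exact h
  have hWNN : GridThm.WW (N * N) = 2 * N * (N - 1) := by
    have htt : GridThm.tt (N * N) = 2 * N := GridThm.tt_sq hN1
    unfold GridThm.WW
    rw [htt]
    obtain ⟨n', rfl⟩ : ∃ n', N = n' + 1 := ⟨N - 1, by omega⟩
    have e1 : (n' + 1) * (n' + 1) = n' * n' + 2 * n' + 1 := by ring
    have e2 : 2 * (n' + 1) * (n' + 1 - 1) = 2 * (n' * n') + 2 * n' := by
      rw [show n' + 1 - 1 = n' by omega]; ring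
    omega
  have hP : ℓ ≤ GridThm.WW (N * N) := by rw [hWNN]; exact hℓ
  have hex : ∃ k, ℓ ≤ GridThm.WW k := ⟨N * N, hP⟩
  set n := Nat.find hex with hn
  have hn_spec : ℓ ≤ GridThm.WW n := Nat.find_spec hex
  have hnNN : n ≤ N * N := Nat.find_min' hex hP
  have hWW1 : GridThm.WW 1 = 0 := by
    have h2 := GridThm.tt_ge2 (le_refl 1)
    have h3 := GridThm.tt_le2n 1
    unfold GridThm.WW
    omega
  have hWW0 : GridThm.WW 0 = 0 := by
    have h3 := GridThm.tt_le2n 0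
    unfold GridThm.WW
    omega
  have hn2 : 2 ≤ n := by
    by_contra hcon
    push_neg at hcon
    have : n = 0 ∨ n = 1 := by omega
    rcases this with h | h <;> rw [h] at hn_spec <;> omega
  have hn1lt : GridThm.WW (n - 1) < ℓ := by
    have hlt : n - 1 < n := by omega
    have := Nat.find_min hex hlt
    omega
  obtain ⟨Λ₀, hsub₀, hcard₀, hnum₀, hcov₀⟩ := GridThm.construct h1 hn2 hnNN hn_spec hn1lt
  refine ⟨Λ₀, hsub₀, hcard₀, hnum₀, ?_⟩
  intro Λ hsubΛ hcardΛ
  have hneΛ : Λ.Nonempty := Finset.card_pos.1 (by omega)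
  obtain ⟨S, hb, hcast⟩ := GridThm.master Λ hsubΛ hneΛ
  have hnS : n ≤ S + 1 := Nat.find_min' hex (le_trans hcardΛ hb)
  rw [hnum₀, hcast]
  push_cast
  omega
end
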